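/- arXiv:1708.02281 — 4 statements merged into one kernel-verified Lean document; each statement's English description precedes it below -/
import Mathlib

section
/- For every r ≥ 0 and every unit vector u = (u₁,u₂) ∈ ℝ², one has ∫_{-π}^{π} cos t · exp(i r (u₁ cos t + u₂ sin t)) dt = 2πi u₁ J₁(r). -/
open Real MeasureTheory

/-- Bessel function of the first kind of order `n`, defined by its power series. -/
noncomputable def besselJ (n : ℕ) (t : ℝ) : ℝ :=
  ∑' m : ℕ, ((-1 : ℝ) ^ m / (Nat.factorial m * Nat.factorial (m + n))) * (t / 2) ^ (2 * m + n)

lemma besselJ_one_summable (r : ℝ) :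
    Summable (fun m : ℕ => ((-1 : ℝ) ^ m / (Nat.factorial m * Nat.factorial (m + 1))) * (r / 2) ^ (2 * m + 1)) := by
  apply Summable.of_norm_bounded (g := fun m => (|r/2|) * ((r/2)^2)^m / m.factorial)
  · simpa [mul_div_assoc] using (Real.summable_pow_div_factorial ((r/2)^2)).mul_left (|r/2|)
  · intro m
    have hm : (1:ℝ) ≤ (m+1).factorial := by exact_mod_cast (m+1).factorial_pos
    have hm0 : (0:ℝ) < m.factorial := by exact_mod_cast m.factorial_pos
    have h2 : |r/2| ^ (2*m+1) = |r/2| * ((r/2)^2)^m := by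
      rw [pow_succ', pow_mul, sq_abs]
    calc ‖((-1 : ℝ) ^ m / (Nat.factorial m * Nat.factorial (m + 1))) * (r / 2) ^ (2 * m + 1)‖
        = (|r/2| * ((r/2)^2)^m) / ((m.factorial : ℝ) * (m+1).factorial) := by
          rw [norm_mul, norm_div, norm_pow, norm_pow, norm_neg, norm_one, one_pow, one_div,
            Real.norm_eq_abs (r/2), h2]
          rw [Real.norm_eq_abs, abs_of_pos (by positivity)]
          ring
      _ ≤ (|r/2| * ((r/2)^2)^m) / ((m.factorial : ℝ) * 1) := by
          gcongr
      _ = |r/2| * ((r/2)^2)^m / m.factorial := by rw [mul_one]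

lemma besselJ_one_hasSum (r : ℝ) :
    HasSum (fun m : ℕ => ((-1 : ℝ) ^ m / (Nat.factorial m * Nat.factorial (m + 1))) * (r / 2) ^ (2 * m + 1))
      (besselJ 1 r) := (besselJ_one_summable r).hasSum

lemma cosOdd (m : ℕ) : ∫ t in (-Real.pi)..Real.pi, Real.cos t ^ (2*m+1) = 0 := by
  induction m with
  | zero => simp
  | succ k ih =>
      have h := integral_cos_pow (a := -Real.pi) (b := Real.pi) (2*k+1)
      rw [show 2*(k+1)+1 = (2*k+1)+2 from by ring, h]
      simp [ih, Real.sin_pi]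

lemma cosEven (m : ℕ) : ∫ t in (-Real.pi)..Real.pi, Real.cos t ^ (2*m) =
    2 * Real.pi * (2*m).factorial / ((m.factorial : ℝ)^2 * 4^m) := by
  induction m with
  | zero => simp; ring
  | succ k ih =>
      have h := integral_cos_pow (a := -Real.pi) (b := Real.pi) (2*k)
      rw [show 2*(k+1) = (2*k)+2 from by ring, h, ih]
      have h1 : ((2*k+2).factorial : ℝ) = (2*k+2) * ((2*k+1)) * (2*k).factorial := by
        rw [show (2*k+2) = (2*k+1)+1 from rfl, Nat.factorial_succ, Nat.factorial_succ]
        push_cast; ring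
      have h2 : ((k+1).factorial : ℝ) = (k+1) * k.factorial := by
        rw [Nat.factorial_succ]; push_cast; ring
      rw [h1, h2]
      have hk : (k.factorial : ℝ) ≠ 0 := Nat.cast_ne_zero.2 k.factorial_ne_zero
      have h4 : (4:ℝ)^k ≠ 0 := by positivity
      simp [Real.sin_pi]
      field_simp
      ring

lemma keyIntegral (r : ℝ) :
    HasSum (fun k : ℕ => (Complex.I * r)^k / k.factorial *
        ((∫ t in (-Real.pi)..Real.pi, Real.cos t ^ (k+1) : ℝ) : ℂ))
      (∫ s in (-Real.pi)..Real.pi,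
        ((Real.cos s : ℝ) : ℂ) * Complex.exp (Complex.I * r * Real.cos s)) := by
  have main := intervalIntegral.hasSum_integral_of_dominated_convergence
    (F := fun (k : ℕ) (s : ℝ) => ((Real.cos s : ℝ) : ℂ) * ((Complex.I * r * Real.cos s)^k / k.factorial))
    (f := fun s => ((Real.cos s : ℝ) : ℂ) * Complex.exp (Complex.I * r * Real.cos s))
    (μ := volume) (a := -Real.pi) (b := Real.pi)
    (bound := fun k _ => |r|^k / k.factorial)
    (fun k => (Continuous.aestronglyMeasurable (by fun_prop)))
    (fun k => by
      filter_upwards with t _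
      have h1 : ‖(Real.cos t : ℂ)‖ ≤ 1 := by
        rw [Complex.norm_real, Real.norm_eq_abs]; exact Real.abs_cos_le_one t
      have h2 : ‖Complex.I * r * Real.cos t‖ ≤ |r| := by
        rw [norm_mul, norm_mul, Complex.norm_I, one_mul, Complex.norm_real, Complex.norm_real]
        rw [Real.norm_eq_abs, Real.norm_eq_abs]
        nlinarith [Real.abs_cos_le_one t, abs_nonneg r, abs_nonneg (Real.cos t)]
      calc ‖(Real.cos t : ℂ) * ((Complex.I * r * Real.cos t)^k / k.factorial)‖
          = ‖(Real.cos t : ℂ)‖ * (‖Complex.I * r * Real.cos t‖^k / k.factorial) := by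
            rw [norm_mul, norm_div, norm_pow]; norm_num
        _ ≤ 1 * (|r|^k / k.factorial) := by
            gcongr
        _ = |r|^k / k.factorial := one_mul _)
    (by
      filter_upwards with t _
      exact Real.summable_pow_div_factorial |r|)
    (by
      apply _root_.intervalIntegrable_const (c := ∑' k : ℕ, |r|^k / k.factorial))
    (by
      filter_upwards with t _
      have h := NormedSpace.expSeries_div_hasSum_exp (Complex.I * r * Real.cos t)
      rw [← Complex.exp_eq_exp_ℂ] at h
      exact h.mul_left _)
  convert main using 2 with k
  · rfl
  rw [show (fun s : ℝ => ((Real.cos s : ℝ) : ℂ) * ((Complex.I * r * Real.cos s)^k / k.factorial))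
      = fun s : ℝ => (Complex.I * r)^k / k.factorial * ((Real.cos s ^ (k+1) : ℝ) : ℂ) from ?_]
  · rw [intervalIntegral.integral_const_mul, intervalIntegral.integral_ofReal]
  · funext s
    push_cast
    rw [mul_pow]
    ring

lemma coeffEq (r : ℝ) (m : ℕ) :
    ((-1:ℝ)^m * r^(2*m+1)) / (2*m+1).factorial *
        (2*Real.pi*(2*(m+1)).factorial/(((m+1).factorial : ℝ)^2*4^(m+1)))
      = 2*Real.pi*((-1:ℝ)^m/(m.factorial*(m+1).factorial) * (r/2)^(2*m+1)) := by
  have hf1 : ((2*(m+1)).factorial : ℝ) = (2*(m+1)) * (2*m+1).factorial := by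
    rw [show 2*(m+1) = (2*m+1)+1 from by ring, Nat.factorial_succ]
    push_cast; ring
  have hf2 : ((m+1).factorial : ℝ) = (m+1)*m.factorial := by
    rw [Nat.factorial_succ]; push_cast; ring
  have h4 : (4:ℝ)^(m+1) = 2^(2*m+1)*2 := by
    rw [show (4:ℝ) = 2^2 from by norm_num, ← pow_mul, show 2*(m+1) = (2*m+1)+1 from by ring,
      pow_succ]
  rw [hf1, hf2, h4, div_pow]
  have hm0 : ((m.factorial : ℝ)) ≠ 0 := Nat.cast_ne_zero.2 m.factorial_ne_zero
  have hm1 : ((2*m+1).factorial : ℝ) ≠ 0 := Nat.cast_ne_zero.2 (2*m+1).factorial_ne_zero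
  have h2 : (2:ℝ)^(2*m+1) ≠ 0 := by positivity
  field_simp

lemma mainIntegral (r : ℝ) :
    (∫ s in (-Real.pi)..Real.pi,
        ((Real.cos s : ℝ) : ℂ) * Complex.exp (Complex.I * r * Real.cos s))
      = 2 * Real.pi * Complex.I * ((besselJ 1 r : ℝ) : ℂ) := by
  have h := keyIntegral r
  set c : ℕ → ℂ := fun k => (Complex.I * r)^k / k.factorial *
      ((∫ t in (-Real.pi)..Real.pi, Real.cos t ^ (k+1) : ℝ) : ℂ) with hc
  have hinj : Function.Injective (fun m : ℕ => 2*m+1) := by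
    intro a b hab
    simp only [] at hab
    omega
  have hzero : ∀ k ∉ Set.range (fun m : ℕ => 2*m+1), c k = 0 := by
    intro k hk
    have hke : Even k := by
      rcases Nat.even_or_odd k with he | ho
      · exact he
      · obtain ⟨m, hm⟩ := ho
        exact absurd ⟨m, by simp [hm]⟩ hk
    obtain ⟨m, hm⟩ := hke
    have : k = 2*m := by omega
    simp only [hc, this, cosOdd m]
    simp
  have h2 : HasSum (fun m => c (2*m+1)) (∫ s in (-Real.pi)..Real.pi,
      ((Real.cos s : ℝ) : ℂ) * Complex.exp (Complex.I * r * Real.cos s)) :=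
    (hinj.hasSum_iff hzero).2 h
  have h3 : HasSum (fun m : ℕ =>
      (2 * (Real.pi:ℂ) * Complex.I) * ((((-1 : ℝ) ^ m / (Nat.factorial m * Nat.factorial (m + 1))) * (r / 2) ^ (2 * m + 1) : ℝ) : ℂ))
      ((2 * (Real.pi:ℂ) * Complex.I) * ((besselJ 1 r : ℝ) : ℂ)) :=
    (Complex.ofRealCLM.hasSum (besselJ_one_hasSum r)).mul_left _
  have heq : ∀ m : ℕ, c (2*m+1) =
      (2 * (Real.pi:ℂ) * Complex.I) * ((((-1 : ℝ) ^ m / (Nat.factorial m * Nat.factorial (m + 1))) * (r / 2) ^ (2 * m + 1) : ℝ) : ℂ) := by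
    intro m
    have hI : (Complex.I * r)^(2*m+1) = Complex.I * ((((-1:ℝ))^m * r^(2*m+1) : ℝ) : ℂ) := by
      rw [mul_pow, pow_succ, pow_mul, Complex.I_sq]
      push_cast; ring
    have hint : (∫ t in (-Real.pi)..Real.pi, Real.cos t ^ (2*m+1+1)) =
        2 * Real.pi * (2*(m+1)).factorial / (((m+1).factorial : ℝ)^2 * 4^(m+1)) := by
      rw [show 2*m+1+1 = 2*(m+1) from by ring]
      exact cosEven (m+1)
    simp only [hc]
    rw [hint, hI]
    have := coeffEq r m
    calc Complex.I * ((((-1:ℝ))^m * r^(2*m+1) : ℝ) : ℂ) / ((2*m+1).factorial : ℂ) *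
          ((2 * Real.pi * (2*(m+1)).factorial / (((m+1).factorial : ℝ)^2 * 4^(m+1)) : ℝ) : ℂ)
        = Complex.I * ((((-1:ℝ)^m * r^(2*m+1)) / (2*m+1).factorial *
            (2*Real.pi*(2*(m+1)).factorial/(((m+1).factorial : ℝ)^2*4^(m+1))) : ℝ) : ℂ) := by
          push_cast; ring
      _ = Complex.I * ((2*Real.pi*((-1:ℝ)^m/(m.factorial*(m+1).factorial) * (r/2)^(2*m+1)) : ℝ) : ℂ) := by
          rw [coeffEq r m]
      _ = _ := by push_cast; ring
  have h3' : HasSum (fun m => c (2*m+1))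
      ((2 * (Real.pi:ℂ) * Complex.I) * ((besselJ 1 r : ℝ) : ℂ)) := by
    exact (funext heq : (fun m => c (2*m+1)) = _) ▸ h3
  exact h2.unique h3'

lemma oddZero (r : ℝ) :
    (∫ t in (-Real.pi)..Real.pi,
        ((Real.sin t : ℝ) : ℂ) * Complex.exp (Complex.I * r * Real.cos t)) = 0 := by
  set f : ℝ → ℂ := fun t => ((Real.sin t : ℝ) : ℂ) * Complex.exp (Complex.I * r * Real.cos t) with hf
  have h := intervalIntegral.integral_comp_neg (a := -Real.pi) (b := Real.pi) f
  rw [neg_neg] at h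
  have hodd : ∀ t, f (-t) = - f t := by
    intro t
    simp only [hf, Real.sin_neg, Real.cos_neg]
    push_cast; ring
  rw [funext hodd] at h
  rw [intervalIntegral.integral_neg] at h
  have : (2:ℂ) * ∫ t in (-Real.pi)..Real.pi, f t = 0 := by linear_combination -h
  simpa using this

/-- For every `r ≥ 0` and every unit vector `(u₁, u₂) ∈ ℝ²`,
`∫_{-π}^{π} cos t · exp(i r (u₁ cos t + u₂ sin t)) dt = 2πi u₁ J₁(r)`. -/
theorem circle_integral_cos_exp_eq_besselJ_one (r : ℝ) (hr : 0 ≤ r) (u₁ u₂ : ℝ)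
    (hu : u₁ ^ 2 + u₂ ^ 2 = 1) :
    ∫ t in (-Real.pi)..Real.pi,
        ((Real.cos t : ℝ) : ℂ) *
          Complex.exp (Complex.I * (r : ℂ) *
            ((u₁ * Real.cos t + u₂ * Real.sin t : ℝ) : ℂ)) =
      2 * (Real.pi : ℂ) * Complex.I * (u₁ : ℂ) * ((besselJ 1 r : ℝ) : ℂ) := by
  -- find the angle φ
  set z : ℂ := u₁ + u₂ * Complex.I with hz
  have hre : z.re = u₁ := by simp [hz]
  have him : z.im = u₂ := by simp [hz]
  have habs : ‖z‖ = 1 := by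
    have : ‖z‖ ^ 2 = 1 := by
      rw [Complex.sq_norm, Complex.normSq_apply, hre, him, ← hu]; ring
    nlinarith [norm_nonneg z]
  have hz0 : z ≠ 0 := by
    intro h; rw [h] at habs; simp at habs
  set φ := Complex.arg z with hφ
  have hcos : Real.cos φ = u₁ := by rw [hφ, Complex.cos_arg hz0, hre, habs, div_one]
  have hsin : Real.sin φ = u₂ := by rw [hφ, Complex.sin_arg, him, habs, div_one]
  -- rewrite the phase
  have hid : ∀ t : ℝ, u₁ * Real.cos t + u₂ * Real.sin t = Real.cos (t - φ) := by
    intro t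
    rw [Real.cos_sub, hcos, hsin]; ring
  set F : ℝ → ℂ := fun t => ((Real.cos t : ℝ) : ℂ) *
      Complex.exp (Complex.I * r * ((Real.cos (t - φ) : ℝ) : ℂ)) with hF
  have hstep1 : (∫ t in (-Real.pi)..Real.pi,
      ((Real.cos t : ℝ) : ℂ) * Complex.exp (Complex.I * (r : ℂ) *
        ((u₁ * Real.cos t + u₂ * Real.sin t : ℝ) : ℂ)))
      = ∫ t in (-Real.pi)..Real.pi, F t := by
    apply intervalIntegral.integral_congr
    intro t _
    simp only [hF, hid t]
  have hper : Function.Periodic F (2*Real.pi) := by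
    intro t
    simp only [hF]
    rw [Real.cos_add_two_pi, show t + 2*Real.pi - φ = (t - φ) + 2*Real.pi from by ring,
      Real.cos_add_two_pi]
  have hshift : (∫ t in (-Real.pi)..Real.pi, F t)
      = ∫ t in (-Real.pi)..Real.pi, F (t + φ) := by
    have h1 := hper.intervalIntegral_add_eq (-Real.pi) (-Real.pi + φ)
    rw [show -Real.pi + 2*Real.pi = Real.pi from by ring,
      show -Real.pi + φ + 2*Real.pi = Real.pi + φ from by ring] at h1
    rw [h1, intervalIntegral.integral_comp_add_right]
  have hFshift : ∀ t : ℝ, F (t + φ) =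
      (u₁ : ℂ) * (((Real.cos t : ℝ) : ℂ) * Complex.exp (Complex.I * r * Real.cos t))
      - (u₂ : ℂ) * (((Real.sin t : ℝ) : ℂ) * Complex.exp (Complex.I * r * Real.cos t)) := by
    intro t
    simp only [hF, show t + φ - φ = t from by ring]
    rw [Real.cos_add, hcos, hsin]
    push_cast; ring
  have hcont1 : IntervalIntegrable (fun t : ℝ =>
      (u₁ : ℂ) * (((Real.cos t : ℝ) : ℂ) * Complex.exp (Complex.I * r * Real.cos t)))
      volume (-Real.pi) Real.pi := (Continuous.intervalIntegrable (by fun_prop) _ _)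
  have hcont2 : IntervalIntegrable (fun t : ℝ =>
      (u₂ : ℂ) * (((Real.sin t : ℝ) : ℂ) * Complex.exp (Complex.I * r * Real.cos t)))
      volume (-Real.pi) Real.pi := (Continuous.intervalIntegrable (by fun_prop) _ _)
  rw [hstep1, hshift]
  calc (∫ t in (-Real.pi)..Real.pi, F (t + φ))
      = ∫ t in (-Real.pi)..Real.pi,
          ((u₁ : ℂ) * (((Real.cos t : ℝ) : ℂ) * Complex.exp (Complex.I * r * Real.cos t))
          - (u₂ : ℂ) * (((Real.sin t : ℝ) : ℂ) * Complex.exp (Complex.I * r * Real.cos t))) := by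
        apply intervalIntegral.integral_congr
        intro t _
        exact hFshift t
    _ = (u₁ : ℂ) * (∫ t in (-Real.pi)..Real.pi,
          ((Real.cos t : ℝ) : ℂ) * Complex.exp (Complex.I * r * Real.cos t))
        - (u₂ : ℂ) * (∫ t in (-Real.pi)..Real.pi,
          ((Real.sin t : ℝ) : ℂ) * Complex.exp (Complex.I * r * Real.cos t)) := by
        rw [intervalIntegral.integral_sub hcont1 hcont2,
          intervalIntegral.integral_const_mul, intervalIntegral.integral_const_mul]
    _ = (u₁ : ℂ) * (2 * Real.pi * Complex.I * ((besselJ 1 r : ℝ) : ℂ)) - (u₂ : ℂ) * 0 := by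
        rw [mainIntegral r, oddZero r]
    _ = 2 * (Real.pi : ℂ) * Complex.I * (u₁ : ℂ) * ((besselJ 1 r : ℝ) : ℂ) := by ring
end

section
/- For every r ≥ 0 and every unit vector u = (u₁,u₂) ∈ ℝ², one has ∫_{-π}^{π} cos²t · exp(i r (u₁ cos t + u₂ sin t)) dt = π J₀(r) + (1 − 2u₁²) π J₂(r). -/
open Real MeasureTheory intervalIntegral

noncomputable def W (n : ℕ) : ℝ := ∫ t in (-π)..π, Real.cos t ^ n

lemma W_zero : W 0 = 2 * π := by
  simp [W, two_mul]

lemma W_rec (n : ℕ) : W (n + 2) = (n + 1) / (n + 2) * W n := by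
  unfold W
  rw [integral_cos_pow]
  simp

lemma W_odd (m : ℕ) : W (2 * m + 1) = 0 := by
  induction m with
  | zero => simp [W]
  | succ k ih =>
    have : 2 * (k+1) + 1 = (2*k+1) + 2 := by ring
    rw [this, W_rec, ih, mul_zero]

lemma W_even (m : ℕ) : W (2 * m) = 2 * π * (Nat.factorial (2*m)) / (4 ^ m * (Nat.factorial m)^2) := by
  induction m with
  | zero => simpa using W_zero
  | succ k ih =>
    have h : 2 * (k+1) = (2*k) + 2 := by ring
    rw [h, W_rec, ih]
    have h2 : ((2*k : ℕ) : ℝ) = 2 * k := by push_cast; ring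
    rw [show (2*k+2) = (2*k+1)+1 by ring, Nat.factorial_succ, Nat.factorial_succ,
      Nat.factorial_succ]
    push_cast
    have hk : (Nat.factorial k : ℝ) ≠ 0 := Nat.cast_ne_zero.2 (Nat.factorial_ne_zero k)
    have h2k : (Nat.factorial (2*k) : ℝ) ≠ 0 := Nat.cast_ne_zero.2 (Nat.factorial_ne_zero _)
    have h4 : (4:ℝ)^k ≠ 0 := by positivity
    field_simp
    ring

lemma odd_vanish (k : ℕ) : (∫ s in (-π)..π, Real.sin (2*s) * Real.cos s ^ k) = 0 := by
  have h := intervalIntegral.integral_comp_neg (a := -π) (b := π)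
    (fun s => Real.sin (2*s) * Real.cos s ^ k)
  simp only [neg_neg] at h
  have h2 : (∫ s in (-π)..π, Real.sin (2*(-s)) * Real.cos (-s) ^ k)
      = ∫ s in (-π)..π, -(Real.sin (2*s) * Real.cos s ^ k) := by
    congr 1; ext s
    rw [mul_neg, Real.sin_neg, Real.cos_neg]; ring
  rw [h2, intervalIntegral.integral_neg] at h
  linarith

noncomputable def A (φ : ℝ) (k : ℕ) : ℝ := ∫ s in (-π)..π, Real.cos (s+φ)^2 * Real.cos s ^ k


lemma A_eq (φ : ℝ) (k : ℕ) :
    A φ k = W k / 2 + Real.cos (2*φ) / 2 * (2 * W (k+2) - W k) := by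
  have hpt : ∀ s : ℝ, Real.cos (s+φ)^2 * Real.cos s ^ k
      = (1/2) * Real.cos s ^ k
        + (Real.cos (2*φ)/2) * (2 * Real.cos s ^ (k+2) - Real.cos s ^ k)
        + (-(Real.sin (2*φ)/2)) * (Real.sin (2*s) * Real.cos s ^ k) := by
    intro s
    have h1 : Real.cos (s+φ)^2 = 1/2 + Real.cos (2*s + 2*φ)/2 := by
      rw [Real.cos_sq]; ring_nf
    have h2 : Real.cos (2*s + 2*φ) = Real.cos (2*s) * Real.cos (2*φ)
        - Real.sin (2*s) * Real.sin (2*φ) := Real.cos_add _ _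
    have h3 : Real.cos (2*s) = 2 * Real.cos s ^ 2 - 1 := Real.cos_two_mul s
    rw [h1, h2, h3]
    ring
  unfold A
  rw [intervalIntegral.integral_congr (g := fun s => (1/2) * Real.cos s ^ k
        + (Real.cos (2*φ)/2) * (2 * Real.cos s ^ (k+2) - Real.cos s ^ k)
        + (-(Real.sin (2*φ)/2)) * (Real.sin (2*s) * Real.cos s ^ k))
      (fun s _ => hpt s)]
  have i1 : IntervalIntegrable (fun s => (1/2 : ℝ) * Real.cos s ^ k) volume (-π) π := by
    apply Continuous.intervalIntegrable; fun_prop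
  have i2 : IntervalIntegrable (fun s => (Real.cos (2*φ)/2) * (2 * Real.cos s ^ (k+2) - Real.cos s ^ k)) volume (-π) π := by
    apply Continuous.intervalIntegrable; fun_prop
  have i3 : IntervalIntegrable (fun s => (-(Real.sin (2*φ)/2)) * (Real.sin (2*s) * Real.cos s ^ k)) volume (-π) π := by
    apply Continuous.intervalIntegrable; fun_prop
  rw [intervalIntegral.integral_add (i1.add i2) i3, intervalIntegral.integral_add i1 i2,
    intervalIntegral.integral_const_mul, intervalIntegral.integral_const_mul,
    intervalIntegral.integral_const_mul, odd_vanish]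
  have isub : (∫ s in (-π)..π, (2 * Real.cos s ^ (k+2) - Real.cos s ^ k))
      = 2 * W (k+2) - W k := by
    rw [intervalIntegral.integral_sub (by apply Continuous.intervalIntegrable; fun_prop)
      (by apply Continuous.intervalIntegrable; fun_prop),
      intervalIntegral.integral_const_mul]
    rfl
  rw [isub]
  unfold W
  ring

lemma key (g : ℝ → ℝ) (hg : Continuous g) (hb : ∀ t, |g t| ≤ 1) (r : ℝ) (hr : 0 ≤ r) :
    (∫ t in (-π)..π, (g t : ℂ) * Complex.exp (Complex.I * r * Real.cos t)) =
    ∑' k : ℕ, (Complex.I * r)^k / (Nat.factorial k) *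
      ((∫ t in (-π)..π, g t * Real.cos t ^ k : ℝ) : ℂ) := by
  have hπ := Real.pi_pos
  have hle : (-π) ≤ π := by linarith
  set μ : Measure ℝ := volume.restrict (Set.Ioc (-π) π) with hμ
  set F : ℕ → ℝ → ℂ := fun k t => ((Complex.I * r * Real.cos t)^k / (Nat.factorial k)) * (g t : ℂ)
    with hF
  have hnorm : ∀ k t, ‖F k t‖ ≤ r ^ k / (Nat.factorial k) := by
    intro k t
    have he : ‖F k t‖ = ‖Complex.I * (r:ℂ) * (Real.cos t : ℂ)‖^k / (Nat.factorial k) * |g t| := by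
      rw [hF]
      rw [norm_mul, norm_div, norm_pow, Complex.norm_real, Real.norm_eq_abs,
        Complex.norm_natCast]
    rw [he]
    have h1 : ‖Complex.I * (r:ℂ) * (Real.cos t : ℂ)‖ ≤ r := by
      rw [norm_mul, norm_mul, Complex.norm_I, one_mul, Complex.norm_real, Complex.norm_real,
        Real.norm_eq_abs, Real.norm_eq_abs, abs_of_nonneg hr]
      calc r * |Real.cos t| ≤ r * 1 := mul_le_mul_of_nonneg_left (Real.abs_cos_le_one t) hr
        _ = r := mul_one r
    calc ‖Complex.I * (r:ℂ) * (Real.cos t : ℂ)‖^k / (Nat.factorial k) * |g t|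
        ≤ r ^ k / (Nat.factorial k) * 1 :=
          mul_le_mul ((div_le_div_iff_of_pos_right (by positivity)).2
            (pow_le_pow_left₀ (norm_nonneg _) h1 k)) (hb t) (abs_nonneg _) (by positivity)
      _ = r ^ k / (Nat.factorial k) := mul_one _
  have hFcont : ∀ k, Continuous (F k) := by
    intro k; rw [hF]; fun_prop
  have hF_int : ∀ k, Integrable (F k) μ := fun k => (hFcont k).integrableOn_Ioc
  have hF_sum : Summable fun k => ∫ t, ‖F k t‖ ∂μ := by
    apply Summable.of_nonneg_of_le (fun k => integral_nonneg (fun t => norm_nonneg _))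
      (fun k => ?_) (((Real.summable_pow_div_factorial r).mul_left (2*π)))
    calc (∫ t, ‖F k t‖ ∂μ) ≤ ∫ s, r ^ k / (Nat.factorial k) ∂μ := by
          apply integral_mono ((hF_int k).norm) _ (fun t => hnorm k t)
          rw [hμ]
          exact integrableOn_const (by simp [Real.volume_Ioc]) (by simp)
      _ = (2*π) * (r ^ k / (Nat.factorial k)) := by
          rw [hμ, setIntegral_const, measureReal_def, Real.volume_Ioc, smul_eq_mul,
            ENNReal.toReal_ofReal (by linarith)]
          ring_nf
  have hexp : ∀ t : ℝ, (g t : ℂ) * Complex.exp (Complex.I * r * Real.cos t) = ∑' k, F k t := by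
    intro t
    have h : Complex.exp (Complex.I * r * Real.cos t)
        = ∑' n : ℕ, (Complex.I * r * Real.cos t)^n / (Nat.factorial n) := by
      rw [Complex.exp_eq_exp_ℂ, NormedSpace.exp_eq_tsum_div]
    rw [h, ← tsum_mul_left]
    congr 1; funext k
    rw [hF]; ring
  rw [intervalIntegral.integral_of_le hle]
  calc (∫ t in Set.Ioc (-π) π, (g t : ℂ) * Complex.exp (Complex.I * r * Real.cos t))
      = ∫ t, (∑' k, F k t) ∂μ := by
          rw [hμ]
          exact setIntegral_congr_fun measurableSet_Ioc (fun t _ => hexp t)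
    _ = ∑' k, ∫ t, F k t ∂μ := (integral_tsum_of_summable_integral_norm hF_int hF_sum).symm
    _ = ∑' k : ℕ, (Complex.I * r)^k / (Nat.factorial k) *
      ((∫ t in (-π)..π, g t * Real.cos t ^ k : ℝ) : ℂ) := by
        congr 1; funext k
        have hpt : ∀ t : ℝ, F k t = ((Complex.I * r)^k / (Nat.factorial k)) *
            (((g t * Real.cos t ^ k : ℝ)) : ℂ) := by
          intro t
          rw [hF]
          push_cast
          ring
        rw [integral_congr_ae (Filter.Eventually.of_forall hpt), MeasureTheory.integral_const_mul]
        rw [intervalIntegral.integral_of_le hle]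
        rw [hμ]
        congr 1
        exact _root_.integral_ofReal




lemma W_abs (k : ℕ) : |W k| ≤ 2 * π := by
  have h := intervalIntegral.norm_integral_le_of_norm_le_const (C := 1)
    (f := fun t => Real.cos t ^ k) (a := -π) (b := π) (fun x _ => by
      rw [Real.norm_eq_abs, abs_pow]
      exact pow_le_one₀ (abs_nonneg _) (Real.abs_cos_le_one x))
  rw [Real.norm_eq_abs] at h
  refine h.trans ?_
  rw [sub_neg_eq_add, abs_of_pos (by positivity : (0:ℝ) < π + π)]
  linarith

lemma fact_le_fact_cast (m : ℕ) : ((Nat.factorial m : ℝ)) * 1 ≤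
    (Nat.factorial m : ℝ) * (Nat.factorial m : ℝ) := by
  have h1 : (1:ℝ) ≤ Nat.factorial m := by exact_mod_cast Nat.one_le_iff_ne_zero.2 (Nat.factorial_ne_zero m)
  nlinarith

lemma sum_eval (r : ℝ) (hr : 0 ≤ r) (c2 : ℝ) (hc2 : |c2| ≤ 1) :
    ∑' k : ℕ, (Complex.I * r)^k / (Nat.factorial k) *
      ((W k / 2 + c2 / 2 * (2 * W (k+2) - W k) : ℝ) : ℂ)
    = ((π * besselJ 0 r - c2 * π * besselJ 2 r : ℝ) : ℂ) := by
  have hπ := Real.pi_pos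
  set aR : ℕ → ℝ := fun k => W k / 2 + c2 / 2 * (2 * W (k+2) - W k) with haR
  set f : ℕ → ℂ := fun k => (Complex.I * r)^k / (Nat.factorial k) * ((aR k : ℝ) : ℂ) with hf
  have haRb : ∀ k, |aR k| ≤ 4 * π := by
    intro k
    have h1 := W_abs k
    have h2 := W_abs (k+2)
    have hX : |2 * W (k+2) - W k| ≤ 6 * π := by
      calc |2 * W (k+2) - W k| ≤ |2 * W (k+2)| + |W k| := abs_sub _ _
        _ = 2 * |W (k+2)| + |W k| := by rw [abs_mul]; norm_num
        _ ≤ 6 * π := by linarith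
    show |W k / 2 + c2 / 2 * (2 * W (k+2) - W k)| ≤ 4 * π
    calc |W k / 2 + c2 / 2 * (2 * W (k+2) - W k)|
        ≤ |W k / 2| + |c2 / 2 * (2 * W (k+2) - W k)| := abs_add_le _ _
      _ = |W k|/2 + |c2|/2 * |2 * W (k+2) - W k| := by
          rw [abs_div, abs_mul, abs_div]; norm_num
      _ ≤ 4 * π := by
          nlinarith [mul_le_mul hc2 hX (abs_nonneg _) (by norm_num : (0:ℝ) ≤ 1)]
  have hfs : Summable f := by
    apply Summable.of_norm
    apply Summable.of_nonneg_of_le (fun k => norm_nonneg _) (fun k => ?_)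
      ((Real.summable_pow_div_factorial r).mul_left (4*π))
    simp only [hf, norm_mul, norm_div, norm_pow, Complex.norm_real, Real.norm_eq_abs,
      Complex.norm_natCast]
    rw [Complex.norm_I, one_mul, abs_of_nonneg hr]
    calc r ^ k / (Nat.factorial k) * |aR k| ≤ r ^ k / (Nat.factorial k) * (4*π) :=
          mul_le_mul_of_nonneg_left (haRb k) (by positivity)
      _ = 4*π * (r ^ k / (Nat.factorial k)) := by ring
  have hsplit := tsum_even_add_odd (hfs.comp_injective (mul_right_injective₀ (two_ne_zero)))
    (hfs.comp_injective (fun a b h => by omega))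
  have hodd : ∀ m : ℕ, f (2*m+1) = 0 := by
    intro m
    have h1 : aR (2*m+1) = 0 := by
      show W (2*m+1) / 2 + c2 / 2 * (2 * W (2*m+1+2) - W (2*m+1)) = 0
      rw [show 2*m+1+2 = 2*(m+1)+1 from by ring, W_odd, W_odd]
      ring
    simp [hf, h1]
  set t1 : ℕ → ℝ := fun m => π * ((-1 : ℝ) ^ m / (Nat.factorial m * Nat.factorial (m + 0)) * (r / 2) ^ (2 * m + 0)) with ht1
  set t2 : ℕ → ℝ := fun m => π * ((-1 : ℝ) ^ m * m / (Nat.factorial m * Nat.factorial (m + 1)) * (r / 2) ^ (2 * m)) with ht2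
  have heven : ∀ m : ℕ, f (2*m) = ((t1 m + c2 * t2 m : ℝ) : ℂ) := by
    intro m
    have hIpow : (Complex.I * r)^(2*m) = (((-r^2 : ℝ))^m : ℝ) := by
      rw [pow_mul]
      have h : (Complex.I * r)^2 = ((-r^2 : ℝ) : ℂ) := by
        rw [mul_pow, Complex.I_sq]; push_cast; ring
      rw [h]; norm_cast
    have hf2 : f (2*m) = (Complex.I * r)^(2*m) / ((Nat.factorial (2*m) : ℕ) : ℂ) *
        ((aR (2*m) : ℝ) : ℂ) := rfl
    rw [hf2, hIpow]
    have hcast : ((-r^2 : ℝ))^m / ((Nat.factorial (2*m) : ℝ)) * aR (2*m)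
        = t1 m + c2 * t2 m := by
      have h1 : aR (2*m) = W (2*m) / 2 + c2 / 2 * (2 * W (2*m+2) - W (2*m)) := rfl
      have h2 : 2*m+2 = 2*(m+1) := by ring
      rw [h1, h2, W_even, W_even]
      simp only [ht1, ht2]
      have e1 : Nat.factorial (2*(m+1)) = (2*m+2) * ((2*m+1) * Nat.factorial (2*m)) := by
        rw [show 2*(m+1) = (2*m+1)+1 from by ring, Nat.factorial_succ, Nat.factorial_succ]
      have e2 : Nat.factorial (m+1) = (m+1) * Nat.factorial m := Nat.factorial_succ m
      rw [e1, e2]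
      have hfm : ((Nat.factorial m : ℝ)) ≠ 0 := Nat.cast_ne_zero.2 (Nat.factorial_ne_zero m)
      have hf2m : ((Nat.factorial (2*m) : ℝ)) ≠ 0 := Nat.cast_ne_zero.2 (Nat.factorial_ne_zero _)
      have h4 : ((4:ℝ))^m ≠ 0 := by positivity
      have hm1 : ((m:ℝ)+1) ≠ 0 := by positivity
      have hr2 : (r/2)^(2*m) = r^(2*m) / 4^m := by
        rw [div_pow, pow_mul, pow_mul]; norm_num
      have hr2' : (r/2)^(2*m+0) = r^(2*m) / 4^m := by rw [add_zero]; exact hr2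
      have hneg : ((-r^2 : ℝ))^m = (-1)^m * r^(2*m) := by rw [neg_pow, pow_mul]
      push_cast
      rw [hneg, hr2, hr2']
      field_simp
      ring
    rw [← hcast]
    push_cast
    ring
  have hsum_t1 : ∑' m, t1 m = π * besselJ 0 r := by
    simp only [ht1]
    rw [tsum_mul_left, besselJ]
  have hst1 : Summable t1 := by
    apply Summable.of_norm
    apply Summable.of_nonneg_of_le (fun k => norm_nonneg _) (fun m => ?_)
      ((Real.summable_pow_div_factorial ((r/2)^2)).mul_left π)
    have h1 : t1 m = π * ((-1:ℝ)^m * ((1:ℝ) /((Nat.factorial m : ℝ) * (Nat.factorial (m+0) : ℝ))) * ((r/2)^2)^m) := by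
      simp only [ht1, add_zero]
      rw [← pow_mul]
      ring
    rw [Real.norm_eq_abs, h1, abs_mul, abs_mul, abs_mul, abs_pow, abs_neg, abs_one, one_pow,
      one_mul, abs_of_pos hπ, abs_of_nonneg (by positivity : (0:ℝ) ≤ ((r/2)^2)^m)]
    have h2 : |(1:ℝ) /((Nat.factorial m : ℝ) * (Nat.factorial (m+0) : ℝ))| ≤ 1 / (Nat.factorial m : ℝ) := by
      rw [abs_of_nonneg (by positivity)]
      rw [div_le_div_iff₀ (by positivity) (by positivity)]
      have h1 : (1:ℝ) ≤ (Nat.factorial m : ℝ) := by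
        exact_mod_cast Nat.one_le_iff_ne_zero.2 (Nat.factorial_ne_zero m)
      rw [add_zero]
      nlinarith
    calc π * (|(1:ℝ) /((Nat.factorial m : ℝ) * (Nat.factorial (m+0) : ℝ))| * ((r/2)^2)^m)
        ≤ π * ((1 / (Nat.factorial m : ℝ)) * ((r/2)^2)^m) :=
          mul_le_mul_of_nonneg_left (mul_le_mul_of_nonneg_right h2 (by positivity)) hπ.le
      _ = π * (((r/2)^2)^m / (Nat.factorial m : ℝ)) := by ring
  have hst2 : Summable t2 := by
    apply Summable.of_norm
    apply Summable.of_nonneg_of_le (fun k => norm_nonneg _) (fun m => ?_)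
      ((Real.summable_pow_div_factorial ((r/2)^2)).mul_left π)
    have h1 : t2 m = π * ((-1:ℝ)^m * ((m:ℝ) /((Nat.factorial m : ℝ) * (Nat.factorial (m+1) : ℝ))) * ((r/2)^2)^m) := by
      simp only [ht2]
      rw [← pow_mul]
      ring
    rw [Real.norm_eq_abs, h1, abs_mul, abs_mul, abs_mul, abs_pow, abs_neg, abs_one, one_pow,
      one_mul, abs_of_pos hπ, abs_of_nonneg (by positivity : (0:ℝ) ≤ ((r/2)^2)^m)]
    have hm1 : (m:ℝ) ≤ (Nat.factorial (m+1) : ℝ) := by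
      exact_mod_cast (Nat.le_succ m).trans (Nat.self_le_factorial (m+1))
    have h2 : |(m:ℝ) /((Nat.factorial m : ℝ) * (Nat.factorial (m+1) : ℝ))| ≤ 1 / (Nat.factorial m : ℝ) := by
      rw [abs_of_nonneg (by positivity)]
      rw [div_le_div_iff₀ (by positivity) (by positivity)]
      have h3 : (0:ℝ) < (Nat.factorial m : ℝ) := by positivity
      nlinarith
    calc π * (|(m:ℝ) /((Nat.factorial m : ℝ) * (Nat.factorial (m+1) : ℝ))| * ((r/2)^2)^m)
        ≤ π * ((1 / (Nat.factorial m : ℝ)) * ((r/2)^2)^m) :=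
          mul_le_mul_of_nonneg_left (mul_le_mul_of_nonneg_right h2 (by positivity)) hπ.le
      _ = π * (((r/2)^2)^m / (Nat.factorial m : ℝ)) := by ring
  have hsum_t2 : ∑' m, t2 m = -(π * besselJ 2 r) := by
    rw [Summable.tsum_eq_zero_add hst2]
    have ht20 : t2 0 = 0 := by simp [ht2]
    rw [ht20, zero_add]
    have hterm : ∀ j : ℕ, t2 (j+1)
        = -(π * (((-1 : ℝ) ^ j / (Nat.factorial j * Nat.factorial (j + 2))) * (r / 2) ^ (2 * j + 2))) := by
      intro j
      simp only [ht2]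
      have e1 : Nat.factorial (j+1) = (j+1) * Nat.factorial j := Nat.factorial_succ j
      have e2 : Nat.factorial (j+2) = (j+2) * ((j+1) * Nat.factorial j) := by
        rw [show j+2 = (j+1)+1 from rfl, Nat.factorial_succ, e1]
      rw [e1, e2]
      have hfj : ((Nat.factorial j : ℝ)) ≠ 0 := Nat.cast_ne_zero.2 (Nat.factorial_ne_zero j)
      have hj1 : ((j:ℝ)+1) ≠ 0 := by positivity
      have hj2 : ((j:ℝ)+2) ≠ 0 := by positivity
      rw [show 2*(j+1) = 2*j+2 from by ring]
      push_cast
      field_simp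
      ring
    rw [tsum_congr hterm, tsum_neg, tsum_mul_left, besselJ]
  rw [← hsplit]
  have hoddsum : ∑' m, f (2*m+1) = 0 := by
    rw [tsum_congr hodd]; exact tsum_zero
  rw [hoddsum, add_zero, tsum_congr heven]
  rw [← Complex.ofReal_tsum]
  have hfin : ∑' m, (t1 m + c2 * t2 m) = π * besselJ 0 r - c2 * π * besselJ 2 r := by
    rw [Summable.tsum_add hst1 (hst2.mul_left c2), hsum_t1, tsum_mul_left, hsum_t2]
    ring
  rw [hfin]

/-- For every `r ≥ 0` and every unit vector `(u₁, u₂) ∈ ℝ²`,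
`∫_{-π}^{π} cos²t · exp(i r (u₁ cos t + u₂ sin t)) dt = π J₀(r) + (1 − 2u₁²) π J₂(r)`. -/
theorem circle_integral_cos_sq_exp (r : ℝ) (hr : 0 ≤ r) (u₁ u₂ : ℝ)
    (hu : u₁ ^ 2 + u₂ ^ 2 = 1) :
    ∫ t in (-Real.pi)..Real.pi,
        ((Real.cos t ^ 2 : ℝ) : ℂ) *
          Complex.exp (Complex.I * (r : ℂ) *
            ((u₁ * Real.cos t + u₂ * Real.sin t : ℝ) : ℂ)) =
      ((Real.pi * besselJ 0 r + (1 - 2 * u₁ ^ 2) * Real.pi * besselJ 2 r : ℝ) : ℂ) := by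
  have hπ := Real.pi_pos
  have hu1 : u₁ ^ 2 ≤ 1 := by nlinarith
  obtain ⟨φ, hcos, hsin⟩ : ∃ φ : ℝ, Real.cos φ = u₁ ∧ Real.sin φ = u₂ := by
    rcases le_or_gt 0 u₂ with h | h
    · refine ⟨Real.arccos u₁, Real.cos_arccos (by nlinarith) (by nlinarith), ?_⟩
      rw [Real.sin_arccos, show 1 - u₁^2 = u₂^2 from by linarith]
      exact Real.sqrt_sq h
    · refine ⟨-Real.arccos u₁, by
        rw [Real.cos_neg]; exact Real.cos_arccos (by nlinarith) (by nlinarith), ?_⟩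
      rw [Real.sin_neg, Real.sin_arccos, show 1 - u₁^2 = u₂^2 from by linarith,
        Real.sqrt_sq_eq_abs, abs_of_neg h]
      ring
  have hproj : ∀ t : ℝ, u₁ * Real.cos t + u₂ * Real.sin t = Real.cos (t - φ) := by
    intro t
    rw [Real.cos_sub, ← hcos, ← hsin]
    ring
  set G : ℝ → ℂ := fun s => ((Real.cos (s+φ)^2 : ℝ) : ℂ) *
    Complex.exp (Complex.I * (r:ℂ) * ((Real.cos s : ℝ) : ℂ)) with hG
  simp only [hproj]
  have hsub : (∫ t in (-π)..π, ((Real.cos t^2 : ℝ):ℂ) *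
      Complex.exp (Complex.I*(r:ℂ)*((Real.cos (t-φ) : ℝ):ℂ)))
      = ∫ s in (-π-φ)..(π-φ), G s := by
    have h := intervalIntegral.integral_comp_add_right (a := -π-φ) (b := π-φ)
      (f := fun t => ((Real.cos t^2 : ℝ):ℂ) *
        Complex.exp (Complex.I*(r:ℂ)*((Real.cos (t-φ) : ℝ):ℂ))) (d := φ)
    rw [show -π-φ+φ = -π from by ring, show π-φ+φ = π from by ring] at h
    rw [← h]
    apply intervalIntegral.integral_congr
    intro s _
    simp only [hG]
    rw [show s+φ-φ = s from by ring]
  have hGper : Function.Periodic G (2*π) := by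
    intro s
    simp only [hG]
    rw [show s+2*π+φ = (s+φ)+2*π from by ring, Real.cos_add_two_pi,
      Real.cos_add_two_pi]
  have hper := hGper.intervalIntegral_add_eq (-π-φ) (-π)
  rw [show -π-φ+2*π = π-φ from by ring, show -π+2*π = π from by ring] at hper
  rw [hsub, hper]
  have hb : ∀ s : ℝ, |Real.cos (s+φ)^2| ≤ 1 := by
    intro s
    rw [abs_pow]
    exact pow_le_one₀ (abs_nonneg _) (Real.abs_cos_le_one _)
  have hkey := key (fun s => Real.cos (s+φ)^2) (by fun_prop) hb r hr
  simp only [hG]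
  rw [hkey]
  have hA : ∀ k : ℕ, (∫ s in (-π)..π, Real.cos (s+φ)^2 * Real.cos s ^ k)
      = W k / 2 + Real.cos (2*φ) / 2 * (2 * W (k+2) - W k) := fun k => A_eq φ k
  simp only [hA]
  rw [sum_eval r hr (Real.cos (2*φ)) (Real.abs_cos_le_one _)]
  have hc2 : Real.cos (2*φ) = 2*u₁^2 - 1 := by
    rw [Real.cos_two_mul, hcos]
  rw [hc2]
  norm_cast
  ring
end

section
/- Fix E > 0. The covariance function r^E(u) := J₀(2π√E ‖u‖) is twice differentiable at every nonzero u = (u₁,u₂) ∈ ℝ², and its pure second partial derivative satisfies ∂²r^E/∂u₁²(u) = −2π²E ( J₀(2π√E ‖u‖) + (1 − 2u₁²/‖u‖²) J₂(2π√E ‖u‖) ) (and analogously with the index 2 replacing 1). -/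
open Real MeasureTheory

/-- The covariance kernel `r^E(u) = J₀(2π√E ‖u‖)` of Berry's random wave model. -/
noncomputable def covKernel (E : ℝ) (u : EuclideanSpace ℝ (Fin 2)) : ℝ :=
  besselJ 0 (2 * Real.pi * Real.sqrt E * ‖u‖)

/-- First partial derivative of `covKernel E` in direction `i`. -/
noncomputable def covKernelPartial (E : ℝ) (i : Fin 2) (u : EuclideanSpace ℝ (Fin 2)) : ℝ :=
  fderiv ℝ (covKernel E) u (EuclideanSpace.single i 1)


noncomputable def S (b : ℕ → ℝ) (x : ℝ) : ℝ := ∑' m : ℕ, b m * x ^ m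

lemma summable_S {b : ℕ → ℝ} (hb : ∀ m, |b m| ≤ ((m.factorial : ℝ))⁻¹) (x : ℝ) :
    Summable (fun m => b m * x ^ m) := by
  refine Summable.of_norm_bounded (Real.summable_pow_div_factorial |x|) (fun m => ?_)
  rw [norm_mul, norm_pow, Real.norm_eq_abs, Real.norm_eq_abs, div_eq_mul_inv, mul_comm]
  gcongr
  exact hb m

lemma summable_deriv_bound (R : ℝ) (hR : 1 ≤ R) :
    Summable (fun n : ℕ => (n : ℝ) * R ^ n / n.factorial) := by
  apply Summable.of_nonneg_of_le (fun n => by positivity)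
    (fun n => ?_) (Real.summable_pow_div_factorial (2 * R))
  have h1 : (n : ℝ) ≤ 2 ^ n := by exact_mod_cast (Nat.lt_two_pow_self (n := n)).le
  calc (n : ℝ) * R ^ n / n.factorial ≤ 2 ^ n * R ^ n / n.factorial := by gcongr
    _ = (2 * R) ^ n / n.factorial := by rw [mul_pow]

lemma hasDerivAt_S {b b' : ℕ → ℝ} (hb : ∀ m, |b m| ≤ ((m.factorial : ℝ))⁻¹)
    (hb' : ∀ m, b' m = (m + 1 : ℝ) * b (m + 1)) (x : ℝ) :
    HasDerivAt (S b) (S b' x) x := by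
  set R : ℝ := |x| + 1 with hRdef
  have hxR : |x| ≤ R := by simp [hRdef]
  have hR1 : 1 ≤ R := le_add_of_nonneg_left (abs_nonneg x)
  have hmem : x ∈ Metric.ball (0:ℝ) R := by
    simp only [Metric.mem_ball, Real.dist_eq, sub_zero, hRdef]
    linarith
  have bound : ∀ (n : ℕ) (y : ℝ), |y| ≤ R →
      ‖b n * ((n : ℝ) * y ^ (n - 1))‖ ≤ (n : ℝ) * R ^ n / n.factorial := by
    intro n y hy
    rw [Real.norm_eq_abs, abs_mul, abs_mul, abs_pow, Nat.abs_cast]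
    have h1 : |y| ^ (n-1) ≤ R ^ n := by
      calc |y| ^ (n - 1) ≤ R ^ (n - 1) := by gcongr
        _ ≤ R ^ n := pow_le_pow_right₀ hR1 (Nat.sub_le n 1)
    calc |b n| * ((n:ℝ) * |y| ^ (n - 1)) ≤ ((n.factorial : ℝ))⁻¹ * ((n:ℝ) * R ^ n) := by
          apply mul_le_mul (hb n) (by gcongr) (by positivity) (by positivity)
      _ = (n : ℝ) * R ^ n / n.factorial := by ring
  have key : HasDerivAt (fun y => ∑' n : ℕ, b n * y ^ n)
      (∑' n : ℕ, b n * ((n : ℝ) * x ^ (n - 1))) x := by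
    refine hasDerivAt_tsum_of_isPreconnected (summable_deriv_bound R hR1) Metric.isOpen_ball
      (convex_ball (0:ℝ) R).isPreconnected
      (g := fun (n : ℕ) (y : ℝ) => b n * y ^ n)
      (g' := fun (n : ℕ) (y : ℝ) => b n * ((n : ℝ) * y ^ (n - 1)))
      (fun n y _ => (hasDerivAt_pow n y).const_mul (b n))
      (fun n y hy => bound n y ?_) hmem (summable_S hb x) hmem
    rw [Metric.mem_ball, Real.dist_eq, sub_zero] at hy
    exact hy.le
  have hsum : Summable (fun n : ℕ => b n * ((n : ℝ) * x ^ (n - 1))) :=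
    Summable.of_norm_bounded (summable_deriv_bound R hR1) (fun n => bound n x hxR)
  have heq : (∑' n : ℕ, b n * ((n : ℝ) * x ^ (n - 1))) = S b' x := by
    rw [Summable.tsum_eq_zero_add hsum]
    simp only [Nat.cast_zero, zero_mul, mul_zero, zero_add, S]
    apply tsum_congr
    intro n
    rw [hb' n]
    push_cast
    ring_nf
  rw [← heq]
  exact key


noncomputable def aa (m : ℕ) : ℝ := (-1) ^ m / (m.factorial * m.factorial * 4 ^ m)
noncomputable def aa1 (m : ℕ) : ℝ := (m + 1 : ℝ) * aa (m + 1)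
noncomputable def aa2 (m : ℕ) : ℝ := (m + 1 : ℝ) * aa1 (m + 1)

lemma abs_aa_eq (m : ℕ) : |aa m| = 1 / ((m.factorial : ℝ) * m.factorial * 4 ^ m) := by
  have hD : (0:ℝ) < (m.factorial : ℝ) * m.factorial * 4 ^ m := by
    have := m.factorial_pos; positivity
  rw [aa, abs_div, abs_pow, abs_neg, abs_one, one_pow, abs_of_pos hD]

lemma abs_aa (m : ℕ) : |aa m| ≤ ((m.factorial : ℝ))⁻¹ := by
  have h0 : (1:ℝ) ≤ m.factorial := by exact_mod_cast m.factorial_pos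
  have h4 : (1:ℝ) ≤ 4 ^ m := one_le_pow₀ (by norm_num)
  rw [abs_aa_eq, inv_eq_one_div, div_le_div_iff₀ (by positivity) (by positivity)]
  nlinarith

lemma abs_aa1 (m : ℕ) : |aa1 m| ≤ ((m.factorial : ℝ))⁻¹ := by
  have h0 : (1:ℝ) ≤ m.factorial := by exact_mod_cast m.factorial_pos
  have h4 : (1:ℝ) ≤ 4 ^ (m+1) := one_le_pow₀ (by norm_num)
  have hfs : (((m+1).factorial : ℕ) : ℝ) = ((m:ℝ)+1) * m.factorial := by
    rw [Nat.factorial_succ]; push_cast; ring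
  rw [aa1, abs_mul, abs_aa_eq, abs_of_nonneg (by positivity : (0:ℝ) ≤ (m:ℝ)+1),
    inv_eq_one_div, mul_div_assoc', mul_one, div_le_div_iff₀ (by positivity) (by positivity),
    hfs]
  have hA : (1:ℝ) ≤ (m:ℝ)+1 := by
    have := Nat.cast_nonneg (α := ℝ) m; linarith
  have hX : (1:ℝ) ≤ ((m:ℝ)+1) * m.factorial := by nlinarith
  have hXQ : (1:ℝ) ≤ (((m:ℝ)+1) * m.factorial) * 4^(m+1) := by nlinarith
  have h5 := mul_le_mul_of_nonneg_left hXQ (by positivity : (0:ℝ) ≤ ((m:ℝ)+1) * m.factorial)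
  nlinarith [h5]

lemma abs_aa2 (m : ℕ) : |aa2 m| ≤ ((m.factorial : ℝ))⁻¹ := by
  have h0 : (1:ℝ) ≤ m.factorial := by exact_mod_cast m.factorial_pos
  have h4 : (1:ℝ) ≤ 4 ^ (m+1+1) := one_le_pow₀ (by norm_num)
  have hfs : (((m+1+1).factorial : ℕ) : ℝ) = ((m:ℝ)+2) * (((m:ℝ)+1) * m.factorial) := by
    rw [Nat.factorial_succ, Nat.factorial_succ]; push_cast; ring
  rw [aa2, aa1, abs_mul, abs_mul, abs_aa_eq,
    abs_of_nonneg (by positivity : (0:ℝ) ≤ (m:ℝ)+1),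
    abs_of_nonneg (by positivity : (0:ℝ) ≤ ((m:ℕ)+1:ℕ) + (1:ℝ))]
  push_cast
  rw [inv_eq_one_div, mul_div_assoc', mul_div_assoc', mul_one,
    div_le_div_iff₀ (by positivity) (by positivity), hfs]
  set F : ℝ := (m.factorial : ℝ)
  have hA : (1:ℝ) ≤ (m:ℝ)+1 := by
    have := Nat.cast_nonneg (α := ℝ) m; linarith
  have hXF : (1:ℝ) ≤ ((m:ℝ)+1) * F := by nlinarith
  have hX : (1:ℝ) ≤ ((m:ℝ)+2) * (((m:ℝ)+1) * F) := by nlinarith [hXF]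
  set X : ℝ := ((m:ℝ)+2) * (((m:ℝ)+1) * F) with hXdef
  have hXQ : (1:ℝ) ≤ X * 4^(m+1+1) := by nlinarith
  have h5 := mul_le_mul_of_nonneg_left hXQ (by positivity : (0:ℝ) ≤ X)
  have h6 : ((m:ℝ)+1) * (((m:ℝ)+1+1) * F) ≤ X := by rw [hXdef]; ring_nf; nlinarith
  nlinarith [h5, h6]

lemma aa_succ (k : ℕ) : ((k : ℝ) + 1) ^ 2 * aa (k + 1) = -(aa k) / 4 := by
  simp only [aa, Nat.factorial_succ, pow_succ]
  push_cast
  have h1 : ((k.factorial : ℕ) : ℝ) ≠ 0 := by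
    exact_mod_cast k.factorial_pos.ne'
  have h2 : ((k : ℝ) + 1) ≠ 0 := by positivity
  have h4 : ((4:ℝ) ^ k) ≠ 0 := by positivity
  field_simp




noncomputable def ee : ℕ → ℝ
  | 0 => 0
  | (m+1) => aa2 m


lemma coeff_zero (m : ℕ) : ee m + aa1 m + aa m / 4 = 0 := by
  cases m with
  | zero =>
    have h := aa_succ 0
    simp only [ee, aa1]
    push_cast at h ⊢
    nlinarith [h]
  | succ m =>
    have h := aa_succ (m + 1)
    simp only [ee, aa2, aa1]
    push_cast at h ⊢
    nlinarith [h]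

lemma summable_ee (x : ℝ) : Summable (fun m => ee m * x ^ m) := by
  rw [← summable_nat_add_iff 1]
  have h : (fun m : ℕ => ee (m + 1) * x ^ (m + 1)) = fun m => x * (aa2 m * x ^ m) := by
    funext m; simp only [ee]; ring
  rw [h]
  exact (summable_S abs_aa2 x).mul_left x

lemma ode (x : ℝ) : x * S aa2 x + S aa1 x + S aa x / 4 = 0 := by
  have h1 : x * S aa2 x = ∑' m : ℕ, ee m * x ^ m := by
    rw [S, ← tsum_mul_left, Summable.tsum_eq_zero_add (summable_ee x)]
    simp only [ee, pow_zero, mul_one, zero_mul, zero_add]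
    exact tsum_congr fun m => by ring
  have h2 : S aa x / 4 = ∑' m : ℕ, (aa m / 4) * x ^ m := by
    rw [S, ← tsum_div_const]
    exact tsum_congr fun m => by ring
  rw [h1, h2, S]
  rw [← Summable.tsum_add (summable_ee x) (summable_S abs_aa1 x),
    ← Summable.tsum_add ((summable_ee x).add (summable_S abs_aa1 x))
      (((summable_S abs_aa x).div_const 4).congr (fun m => by ring))]
  · have : ∀ m : ℕ, ee m * x ^ m + aa1 m * x ^ m + aa m / 4 * x ^ m = 0 := by
      intro m
      have h := coeff_zero m
      have : ee m * x ^ m + aa1 m * x ^ m + aa m / 4 * x ^ m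
          = (ee m + aa1 m + aa m / 4) * x ^ m := by ring
      rw [this, h, zero_mul]
    calc ∑' m : ℕ, (ee m * x ^ m + aa1 m * x ^ m + aa m / 4 * x ^ m)
        = ∑' m : ℕ, (0:ℝ) := tsum_congr this
      _ = 0 := tsum_zero




lemma aa2_eq (m : ℕ) : aa2 m = (-1) ^ m / (m.factorial * (m+2).factorial * 4 ^ (m+2)) := by
  have h0 : ((m.factorial : ℕ) : ℝ) ≠ 0 := by exact_mod_cast m.factorial_pos.ne'
  have h1 : ((m:ℝ) + 1) ≠ 0 := by positivity
  have h2 : ((m:ℝ) + 2) ≠ 0 := by positivity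
  have hf2 : (((m+2).factorial : ℕ) : ℝ) = ((m:ℝ)+2) * (((m:ℝ)+1) * m.factorial) := by
    show (((m+1+1).factorial : ℕ) : ℝ) = _
    rw [Nat.factorial_succ, Nat.factorial_succ]; push_cast; ring
  simp only [aa2, aa1, aa]
  have : m + 1 + 1 = m + 2 := by ring
  rw [this, hf2]
  have h4 : ((4:ℝ) ^ (m+2)) ≠ 0 := by positivity
  push_cast
  field_simp
  simp only [pow_add]
  ring

lemma besselJ0_eq (t : ℝ) : besselJ 0 t = S aa (t ^ 2) := by
  unfold besselJ S
  refine tsum_congr fun m => ?_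
  have h0 : ((m.factorial : ℕ) : ℝ) ≠ 0 := by exact_mod_cast m.factorial_pos.ne'
  rw [aa, Nat.add_zero, Nat.add_zero, pow_mul, div_pow]
  norm_num
  rw [div_pow]
  have h4 : ((4:ℝ) ^ m) ≠ 0 := by positivity
  field_simp

lemma besselJ2_eq (t : ℝ) : besselJ 2 t = 4 * t ^ 2 * S aa2 (t ^ 2) := by
  unfold besselJ S
  rw [← tsum_mul_left]
  refine tsum_congr fun m => ?_
  have h0 : ((m.factorial : ℕ) : ℝ) ≠ 0 := by exact_mod_cast m.factorial_pos.ne'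
  have h2 : (((m+2).factorial : ℕ) : ℝ) ≠ 0 := by exact_mod_cast (m+2).factorial_pos.ne'
  rw [aa2_eq]
  have exp2 : 2*m+2 = 2*(m+1) := by ring
  rw [exp2, pow_mul, div_pow]
  norm_num
  rw [div_pow]
  have h4 : ((4:ℝ) ^ (m+1)) ≠ 0 := by positivity
  have h42 : ((4:ℝ) ^ (m+2)) ≠ 0 := by positivity
  field_simp
  simp only [pow_add, pow_succ]
  ring







noncomputable def QQ (u : EuclideanSpace ℝ (Fin 2)) : ℝ := u 0 * u 0 + u 1 * u 1

noncomputable def DQ (u : EuclideanSpace ℝ (Fin 2)) : EuclideanSpace ℝ (Fin 2) →L[ℝ] ℝ :=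
  (2 * u 0) • (EuclideanSpace.proj 0) + (2 * u 1) • (EuclideanSpace.proj 1)

lemma QQ_eq (u : EuclideanSpace ℝ (Fin 2)) : QQ u = ‖u‖ ^ 2 := by
  rw [← real_inner_self_eq_norm_sq, PiLp.inner_apply, Fin.sum_univ_two]
  rfl

lemma proj_fun (i : Fin 2) :
    (fun v : EuclideanSpace ℝ (Fin 2) => v i) = ⇑(EuclideanSpace.proj (𝕜 := ℝ) i) := rfl

lemma hasFDerivAt_QQ (u : EuclideanSpace ℝ (Fin 2)) : HasFDerivAt QQ (DQ u) u := by
  have h0 : HasFDerivAt (fun v : EuclideanSpace ℝ (Fin 2) => v 0)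
      (EuclideanSpace.proj (𝕜 := ℝ) 0) u := (EuclideanSpace.proj (𝕜 := ℝ) (0 : Fin 2)).hasFDerivAt
  have h1 : HasFDerivAt (fun v : EuclideanSpace ℝ (Fin 2) => v 1)
      (EuclideanSpace.proj (𝕜 := ℝ) 1) u := (EuclideanSpace.proj (𝕜 := ℝ) (1 : Fin 2)).hasFDerivAt
  have h := (h0.mul h0).add (h1.mul h1)
  have heq : (u 0 • EuclideanSpace.proj (𝕜 := ℝ) (0 : Fin 2) + u 0 • EuclideanSpace.proj (𝕜 := ℝ) (0 : Fin 2))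
      + (u 1 • EuclideanSpace.proj (𝕜 := ℝ) (1 : Fin 2) + u 1 • EuclideanSpace.proj (𝕜 := ℝ) (1 : Fin 2)) = DQ u := by
    ext v
    simp [DQ]
    ring
  rw [heq] at h
  exact h

lemma DQ_single (u : EuclideanSpace ℝ (Fin 2)) (i : Fin 2) :
    DQ u (EuclideanSpace.single i 1) = 2 * u i := by
  fin_cases i <;>
    simp [DQ, EuclideanSpace.single_apply]

/-- For `E > 0`, `r^E(u) = J₀(2π√E ‖u‖)` is twice differentiable at every nonzero `u ∈ ℝ²`,
and its pure second partial derivatives satisfy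
`∂²r^E/∂u_i²(u) = −2π²E (J₀(2π√E‖u‖) + (1 − 2u_i²/‖u‖²) J₂(2π√E‖u‖))` for `i = 1, 2`. -/
theorem covKernel_pure_second_partials (E : ℝ) (hE : 0 < E)
    (u : EuclideanSpace ℝ (Fin 2)) (hu : u ≠ 0) :
    DifferentiableAt ℝ (covKernel E) u ∧
    (∀ i : Fin 2, DifferentiableAt ℝ (covKernelPartial E i) u) ∧
    fderiv ℝ (covKernelPartial E 0) u (EuclideanSpace.single 0 1) =
      -(2 * Real.pi ^ 2 * E) *
        (besselJ 0 (2 * Real.pi * Real.sqrt E * ‖u‖) +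
          (1 - 2 * (u 0) ^ 2 / ‖u‖ ^ 2) * besselJ 2 (2 * Real.pi * Real.sqrt E * ‖u‖)) ∧
    fderiv ℝ (covKernelPartial E 1) u (EuclideanSpace.single 1 1) =
      -(2 * Real.pi ^ 2 * E) *
        (besselJ 0 (2 * Real.pi * Real.sqrt E * ‖u‖) +
          (1 - 2 * (u 1) ^ 2 / ‖u‖ ^ 2) * besselJ 2 (2 * Real.pi * Real.sqrt E * ‖u‖)) := by
  set c : ℝ := 2 * Real.pi * Real.sqrt E with hc
  have hc2 : c ^ 2 = 4 * Real.pi ^ 2 * E := by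
    rw [hc, mul_pow, mul_pow, Real.sq_sqrt hE.le]; ring
  have hcov : ∀ v : EuclideanSpace ℝ (Fin 2), covKernel E v = S aa (c ^ 2 * QQ v) := by
    intro v
    rw [covKernel, ← hc, besselJ0_eq, QQ_eq, mul_pow]
  have hderiv1 : ∀ v, HasFDerivAt (covKernel E)
      ((c ^ 2 * S aa1 (c ^ 2 * QQ v)) • DQ v) v := by
    intro v
    have hg : HasDerivAt (fun y => S aa (c ^ 2 * y)) (c ^ 2 * S aa1 (c ^ 2 * QQ v)) (QQ v) := by
      have h := (hasDerivAt_S abs_aa (fun m => rfl) (c ^ 2 * QQ v)).comp (QQ v)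
        ((hasDerivAt_id (QQ v)).const_mul (c ^ 2))
      have he : c ^ 2 * S aa1 (c ^ 2 * QQ v) = S aa1 (c ^ 2 * QQ v) * (c ^ 2 * 1) := by ring
      rw [he]
      exact h
    have h2 := hg.comp_hasFDerivAt v (hasFDerivAt_QQ v)
    have hfn : covKernel E = (fun y => S aa (c ^ 2 * y)) ∘ QQ := funext fun w => hcov w
    rw [hfn]
    exact h2
  have hpart : ∀ (i : Fin 2) v, covKernelPartial E i v
      = 2 * c ^ 2 * S aa1 (c ^ 2 * QQ v) * v i := by
    intro i v
    rw [covKernelPartial, (hderiv1 v).fderiv, ContinuousLinearMap.smul_apply, DQ_single]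
    simp only [smul_eq_mul]
    ring
  have hderiv2 : ∀ (i : Fin 2) v, HasFDerivAt (covKernelPartial E i)
      ((2 * c ^ 2 * S aa1 (c ^ 2 * QQ v)) • (EuclideanSpace.proj (𝕜 := ℝ) i)
        + (v i) • ((2 * c ^ 2 * (c ^ 2 * S aa2 (c ^ 2 * QQ v))) • DQ v)) v := by
    intro i v
    have hFn : covKernelPartial E i = fun w => (2 * c ^ 2 * S aa1 (c ^ 2 * QQ w)) * w i :=
      funext fun w => hpart i w
    rw [hFn]
    have hF : HasFDerivAt (fun w => 2 * c ^ 2 * S aa1 (c ^ 2 * QQ w))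
        ((2 * c ^ 2 * (c ^ 2 * S aa2 (c ^ 2 * QQ v))) • DQ v) v := by
      have hg : HasDerivAt (fun y => 2 * c ^ 2 * S aa1 (c ^ 2 * y))
          (2 * c ^ 2 * (c ^ 2 * S aa2 (c ^ 2 * QQ v))) (QQ v) := by
        have h := ((hasDerivAt_S abs_aa1 (fun m => rfl) (c ^ 2 * QQ v)).comp (QQ v)
          ((hasDerivAt_id (QQ v)).const_mul (c ^ 2))).const_mul (2 * c ^ 2)
        have he : 2 * c ^ 2 * (c ^ 2 * S aa2 (c ^ 2 * QQ v))
            = 2 * c ^ 2 * (S aa2 (c ^ 2 * QQ v) * (c ^ 2 * 1)) := by ring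
        rw [he]
        exact h
      exact hg.comp_hasFDerivAt v (hasFDerivAt_QQ v)
    have hproj : HasFDerivAt (fun w : EuclideanSpace ℝ (Fin 2) => w i)
        (EuclideanSpace.proj (𝕜 := ℝ) i) v := by
      rw [proj_fun]; exact (EuclideanSpace.proj (𝕜 := ℝ) i).hasFDerivAt
    exact hF.mul hproj
  have hval : ∀ i : Fin 2, fderiv ℝ (covKernelPartial E i) u (EuclideanSpace.single i 1)
      = 2 * c ^ 2 * S aa1 (c ^ 2 * QQ u)
        + 4 * c ^ 4 * S aa2 (c ^ 2 * QQ u) * (u i) ^ 2 := by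
    intro i
    rw [(hderiv2 i u).fderiv, ContinuousLinearMap.add_apply, ContinuousLinearMap.smul_apply,
      ContinuousLinearMap.smul_apply, ContinuousLinearMap.smul_apply, DQ_single]
    have : (EuclideanSpace.proj (𝕜 := ℝ) i) (EuclideanSpace.single i 1) = 1 := by
      simp [EuclideanSpace.single_apply]
    rw [this]
    simp only [smul_eq_mul]
    ring
  have hn : ‖u‖ ≠ 0 := norm_ne_zero_iff.mpr hu
  have hfinal : ∀ i : Fin 2,
      fderiv ℝ (covKernelPartial E i) u (EuclideanSpace.single i 1) =
      -(2 * Real.pi ^ 2 * E) *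
        (besselJ 0 (2 * Real.pi * Real.sqrt E * ‖u‖) +
          (1 - 2 * (u i) ^ 2 / ‖u‖ ^ 2) * besselJ 2 (2 * Real.pi * Real.sqrt E * ‖u‖)) := by
    intro i
    have harg : (c * ‖u‖) ^ 2 = c ^ 2 * QQ u := by rw [mul_pow, QQ_eq]
    rw [hval i, besselJ0_eq, besselJ2_eq, harg]
    have hode := ode (c ^ 2 * QQ u)
    have hA1 : S aa1 (c ^ 2 * QQ u)
        = -(c ^ 2 * QQ u * S aa2 (c ^ 2 * QQ u)) - S aa (c ^ 2 * QQ u) / 4 := by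
      linarith
    have hpe : -(2 * Real.pi ^ 2 * E) = -(c ^ 2 / 2) := by rw [hc2]; ring
    rw [hA1, hpe, QQ_eq]
    field_simp
    ring
  exact ⟨(hderiv1 u).differentiableAt,
    fun i => (hderiv2 i u).differentiableAt, hfinal 0, hfinal 1⟩
end

section
/- Fix integers a₁, a₂, a₃, a₄ ∈ {0,1,2} and integers 1 ≤ b₁, b₂, b₃, b₄ ≤ 3 with b₁ + b₂ + b₃ + b₄ = 8. Define, for E > 1, u_E := (E²/(log E)²) ∫_{D⁴} |J_{a₁}(2π√E ‖x₁ − x₂‖)|^{b₁} |J_{a₂}(2π√E ‖x₂ − x₃‖)|^{b₂} |J_{a₃}(2π√E ‖x₃ − x₄‖)|^{b₃} |J_{a₄}(2π√E ‖x₄ − x₁‖)|^{b₄} dx₁ dx₂ dx₃ dx₄. Then u_E → 0 as E → ∞. -/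
open Real MeasureTheory Filter

namespace BesselAux

noncomputable def coeff (n m : ℕ) : ℝ :=
  ((-1 : ℝ) ^ m / (Nat.factorial m * Nat.factorial (m + n)))

noncomputable def term (n m : ℕ) (t : ℝ) : ℝ := coeff n m * (t / 2) ^ (2 * m + n)

noncomputable def d1term (n m : ℕ) (t : ℝ) : ℝ :=
  coeff n m * ((2 * m + n : ℕ) * (t / 2) ^ (2 * m + n - 1)) / 2

noncomputable def d2term (n m : ℕ) (t : ℝ) : ℝ :=
  coeff n m * ((2 * m + n : ℕ) * (((2 * m + n - 1 : ℕ)) * (t / 2) ^ (2 * m + n - 2))) / 4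

noncomputable def J1 (n : ℕ) (t : ℝ) : ℝ := ∑' m, d1term n m t
noncomputable def J2 (n : ℕ) (t : ℝ) : ℝ := ∑' m, d2term n m t

lemma besselJ_eq (n : ℕ) (t : ℝ) : besselJ n t = ∑' m, term n m t := rfl

lemma abs_coeff_le (n m : ℕ) : |coeff n m| ≤ 1 / Nat.factorial m := by
  rw [coeff, abs_div, abs_pow, abs_neg, abs_one, one_pow]
  have h1 : (1:ℝ) ≤ (Nat.factorial (m+n) : ℝ) := by exact_mod_cast Nat.one_le_iff_ne_zero.2 (Nat.factorial_ne_zero _)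
  have h0 : (0:ℝ) < (Nat.factorial m : ℝ) := by exact_mod_cast Nat.factorial_pos m
  rw [abs_of_nonneg (by positivity)]
  rw [div_le_div_iff₀ (by positivity) h0]
  nlinarith

lemma summable_of_le_pow {g : ℕ → ℝ} {c y : ℝ}
    (h : ∀ m, ‖g m‖ ≤ c * y ^ m / Nat.factorial m) : Summable g := by
  refine Summable.of_norm (Summable.of_nonneg_of_le (fun m => norm_nonneg _) h ?_)
  simpa [mul_div_assoc] using (Real.summable_pow_div_factorial y).mul_left c

lemma pow_half_le {t M : ℝ} (hM : 1 ≤ M) (ht : |t| ≤ M) (n m j : ℕ) :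
    |(t / 2) ^ (2 * m + n - j)| ≤ M ^ n * (M ^ 2) ^ m := by
  have h2 : |t / 2| ≤ M := by
    rw [abs_div, abs_two]; linarith [abs_nonneg t]
  calc |(t / 2) ^ (2 * m + n - j)| = |t/2| ^ (2*m+n-j) := by rw [abs_pow]
    _ ≤ M ^ (2*m+n-j) := pow_le_pow_left₀ (abs_nonneg _) h2 _
    _ ≤ M ^ (2*m+n) := pow_le_pow_right₀ hM (Nat.sub_le _ _)
    _ = M ^ n * (M^2) ^ m := by rw [← pow_mul, ← pow_add]; ring_nf

lemma k_le (n m : ℕ) : ((2 * m + n : ℕ) : ℝ) ≤ (n + 2) * 2 ^ m := by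
  have h : (m:ℝ) ≤ 2 ^ m := by exact_mod_cast (Nat.lt_two_pow_self (n := m)).le
  have h1 : (1:ℝ) ≤ 2 ^ m := by
    simpa using pow_le_pow_left₀ (by norm_num : (0:ℝ) ≤ 1) (by norm_num : (1:ℝ) ≤ 2) m
  push_cast
  nlinarith [h, h1]

lemma abs_term_le {t M : ℝ} (hM : 1 ≤ M) (ht : |t| ≤ M) (n m : ℕ) :
    ‖term n m t‖ ≤ (M ^ n) * (M ^ 2) ^ m / Nat.factorial m := by
  rw [Real.norm_eq_abs, term, abs_mul]
  calc |coeff n m| * |(t/2) ^ (2*m+n)| ≤ (1 / Nat.factorial m) * (M ^ n * (M^2)^m) := by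
        apply mul_le_mul (abs_coeff_le n m) ?_ (abs_nonneg _) (by positivity)
        simpa using pow_half_le hM ht n m 0
    _ = (M ^ n) * (M ^ 2) ^ m / Nat.factorial m := by ring

lemma abs_d1term_le {t M : ℝ} (hM : 1 ≤ M) (ht : |t| ≤ M) (n m : ℕ) :
    ‖d1term n m t‖ ≤ ((n+2) * M ^ n) * (2 * M ^ 2) ^ m / Nat.factorial m := by
  rw [Real.norm_eq_abs, d1term, abs_div, abs_mul, abs_mul]
  have h1 := abs_coeff_le n m
  have h2 := pow_half_le hM ht n m 1
  have h3 := k_le n m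
  have hk : |((2 * m + n : ℕ) : ℝ)| = ((2 * m + n : ℕ) : ℝ) := abs_of_nonneg (by positivity)
  rw [hk]
  have hfac : (0:ℝ) < Nat.factorial m := by exact_mod_cast Nat.factorial_pos m
  have hb : |coeff n m| * (((2 * m + n : ℕ):ℝ) * |(t/2) ^ (2*m+n-1)|) ≤
      (1/Nat.factorial m) * (((n+2) * 2^m) * (M ^ n * (M^2)^m)) := by
    apply mul_le_mul h1 ?_ (by positivity) (by positivity)
    apply mul_le_mul h3 h2 (abs_nonneg _) (by positivity)
  have hX : (1/(Nat.factorial m:ℝ)) * (((n+2) * 2^m) * (M ^ n * (M^2)^m)) =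
      ((n+2) * M ^ n) * (2 * M ^ 2) ^ m / Nat.factorial m := by
    rw [mul_pow]; ring
  calc |coeff n m| * (((2 * m + n : ℕ):ℝ) * |(t/2) ^ (2*m+n-1)|) / |2|
      ≤ |coeff n m| * (((2 * m + n : ℕ):ℝ) * |(t/2) ^ (2*m+n-1)|) := by
        rw [abs_two]; apply div_le_self (by positivity) (by norm_num)
    _ ≤ (1/Nat.factorial m) * (((n+2) * 2^m) * (M ^ n * (M^2)^m)) := hb
    _ = ((n+2) * M ^ n) * (2 * M ^ 2) ^ m / Nat.factorial m := hX

lemma abs_d2term_le {t M : ℝ} (hM : 1 ≤ M) (ht : |t| ≤ M) (n m : ℕ) :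
    ‖d2term n m t‖ ≤ ((n+2)^2 * M ^ n) * (4 * M ^ 2) ^ m / Nat.factorial m := by
  rw [Real.norm_eq_abs, d2term, abs_div, abs_mul, abs_mul, abs_mul]
  have h1 := abs_coeff_le n m
  have h2 := pow_half_le hM ht n m 2
  have h3 := k_le n m
  have h3' : ((2 * m + n - 1 : ℕ) : ℝ) ≤ (n + 2) * 2 ^ m := by
    calc ((2 * m + n - 1 : ℕ) : ℝ) ≤ ((2 * m + n : ℕ) : ℝ) := by exact_mod_cast Nat.sub_le _ _
      _ ≤ _ := h3
  have hk : |((2 * m + n : ℕ) : ℝ)| = ((2 * m + n : ℕ) : ℝ) := abs_of_nonneg (by positivity)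
  have hk' : |((2 * m + n - 1 : ℕ) : ℝ)| = ((2 * m + n - 1 : ℕ) : ℝ) := abs_of_nonneg (by positivity)
  rw [hk, hk']
  have hfac : (0:ℝ) < Nat.factorial m := by exact_mod_cast Nat.factorial_pos m
  have hb : |coeff n m| * (((2 * m + n : ℕ):ℝ) * (((2 * m + n - 1 : ℕ):ℝ) * |(t/2) ^ (2*m+n-2)|)) ≤
      (1/Nat.factorial m) * (((n+2) * 2^m) * (((n+2) * 2^m) * (M ^ n * (M^2)^m))) := by
    apply mul_le_mul h1 ?_ (by positivity) (by positivity)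
    apply mul_le_mul h3 ?_ (by positivity) (by positivity)
    apply mul_le_mul h3' h2 (abs_nonneg _) (by positivity)
  have hX : (1/(Nat.factorial m:ℝ)) * (((n+2) * 2^m) * (((n+2) * 2^m) * (M ^ n * (M^2)^m))) =
      ((n+2)^2 * M ^ n) * (4 * M ^ 2) ^ m / Nat.factorial m := by
    rw [mul_pow, show ((4:ℝ))^m = 2^m * 2^m by rw [← mul_pow]; norm_num]
    ring
  calc |coeff n m| * (((2 * m + n : ℕ):ℝ) * (((2 * m + n - 1 : ℕ):ℝ) * |(t/2) ^ (2*m+n-2)|)) / |4|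
      ≤ |coeff n m| * (((2 * m + n : ℕ):ℝ) * (((2 * m + n - 1 : ℕ):ℝ) * |(t/2) ^ (2*m+n-2)|)) := by
        rw [show |(4:ℝ)| = 4 by norm_num]; apply div_le_self (by positivity) (by norm_num)
    _ ≤ (1/Nat.factorial m) * (((n+2) * 2^m) * (((n+2) * 2^m) * (M ^ n * (M^2)^m))) := hb
    _ = ((n+2)^2 * M ^ n) * (4 * M ^ 2) ^ m / Nat.factorial m := hX

lemma summable_term (n : ℕ) (t : ℝ) : Summable (fun m => term n m t) :=
  summable_of_le_pow (c := (max 1 |t|) ^ n) (y := (max 1 |t|)^2)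
    (fun m => abs_term_le (le_max_left _ _) (le_max_right _ _) n m)

lemma summable_d1term (n : ℕ) (t : ℝ) : Summable (fun m => d1term n m t) :=
  summable_of_le_pow (c := (n+2) * (max 1 |t|) ^ n) (y := 2*(max 1 |t|)^2)
    (fun m => abs_d1term_le (le_max_left _ _) (le_max_right _ _) n m)

lemma summable_d2term (n : ℕ) (t : ℝ) : Summable (fun m => d2term n m t) :=
  summable_of_le_pow (c := (n+2)^2 * (max 1 |t|) ^ n) (y := 4*(max 1 |t|)^2)
    (fun m => abs_d2term_le (le_max_left _ _) (le_max_right _ _) n m)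

end BesselAux

namespace BesselAux2
open BesselAux

lemma hasDerivAt_term (n m : ℕ) (t : ℝ) : HasDerivAt (fun t => term n m t) (d1term n m t) t := by
  have h : HasDerivAt (fun t : ℝ => (t/2) ^ (2*m+n))
      ((2*m+n : ℕ) * (t/2) ^ (2*m+n-1) * (1/2)) t := by
    have hbase : HasDerivAt (fun t : ℝ => t/2) (1/2) t := by
      simpa using (hasDerivAt_id t).div_const 2
    simpa using hbase.fun_pow (2*m+n)
  have := h.const_mul (coeff n m)
  refine this.congr_deriv ?_
  simp [d1term]; ring

lemma hasDerivAt_d1term (n m : ℕ) (t : ℝ) : HasDerivAt (fun t => d1term n m t) (d2term n m t) t := by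
  have h : HasDerivAt (fun t : ℝ => (t/2) ^ (2*m+n-1))
      ((2*m+n-1 : ℕ) * (t/2) ^ (2*m+n-1-1) * (1/2)) t := by
    have hbase : HasDerivAt (fun t : ℝ => t/2) (1/2) t := by
      simpa using (hasDerivAt_id t).div_const 2
    simpa using hbase.fun_pow (2*m+n-1)
  have h2 := ((h.const_mul ((2*m+n : ℕ) : ℝ)).const_mul (coeff n m)).div_const 2
  refine h2.congr_deriv ?_
  have : 2*m+n-1-1 = 2*m+n-2 := by omega
  rw [d2term, this]
  ring

lemma hasDerivAt_besselJ (n : ℕ) (t : ℝ) : HasDerivAt (besselJ n) (J1 n t) t := by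
  set M : ℝ := |t| + 1 with hM
  have hM1 : (1:ℝ) ≤ M := by rw [hM]; linarith [abs_nonneg t]
  have hu : TendstoUniformlyOn (fun (N : ℕ) t => ∑ m ∈ Finset.range N, d1term n m t)
      (J1 n) atTop (Metric.ball (0:ℝ) M) := by
    apply tendstoUniformlyOn_tsum_nat
      (u := fun m => ((n+2) * M ^ n) * (2 * M ^ 2) ^ m / Nat.factorial m)
    · exact summable_of_le_pow (fun m => by rw [Real.norm_eq_abs, abs_of_nonneg (by positivity)])
    · intro m x hx
      exact abs_d1term_le hM1 (by simpa [Real.norm_eq_abs] using (Metric.mem_ball.1 hx).le) n m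
  apply hasDerivAt_of_tendstoLocallyUniformlyOn Metric.isOpen_ball
      hu.tendstoLocallyUniformlyOn
  · filter_upwards with N x _
    exact HasDerivAt.sum (fun m _ => hasDerivAt_term n m x)
  · intro x _
    simpa only [Finset.sum_apply, besselJ_eq] using ((summable_term n x).hasSum).tendsto_sum_nat
  · rw [Metric.mem_ball, hM]
    simpa [Real.dist_eq] using by linarith [abs_nonneg t]

lemma hasDerivAt_J1 (n : ℕ) (t : ℝ) : HasDerivAt (J1 n) (J2 n t) t := by
  set M : ℝ := |t| + 1 with hM
  have hM1 : (1:ℝ) ≤ M := by rw [hM]; linarith [abs_nonneg t]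
  have hu : TendstoUniformlyOn (fun (N : ℕ) t => ∑ m ∈ Finset.range N, d2term n m t)
      (J2 n) atTop (Metric.ball (0:ℝ) M) := by
    apply tendstoUniformlyOn_tsum_nat
      (u := fun m => ((n+2)^2 * M ^ n) * (4 * M ^ 2) ^ m / Nat.factorial m)
    · exact summable_of_le_pow (fun m => by rw [Real.norm_eq_abs, abs_of_nonneg (by positivity)])
    · intro m x hx
      exact abs_d2term_le hM1 (by simpa [Real.norm_eq_abs] using (Metric.mem_ball.1 hx).le) n m
  apply hasDerivAt_of_tendstoLocallyUniformlyOn Metric.isOpen_ball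
      hu.tendstoLocallyUniformlyOn
  · filter_upwards with N x _
    exact HasDerivAt.sum (fun m _ => hasDerivAt_d1term n m x)
  · intro x _
    simpa only [Finset.sum_apply, J1] using ((summable_d1term n x).hasSum).tendsto_sum_nat
  · rw [Metric.mem_ball, hM]
    simpa [Real.dist_eq] using by linarith [abs_nonneg t]

end BesselAux2

namespace BesselODE
open BesselAux BesselAux2

noncomputable def Eterm (n : ℕ) (t : ℝ) (m : ℕ) : ℝ :=
  coeff n m * (((2*m+n : ℕ) : ℝ)^2 - (n:ℝ)^2) * (t/2)^(2*m+n)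

lemma combine_eq (n m : ℕ) (t : ℝ) :
    t^2 * d2term n m t + (t * d1term n m t + (-(n:ℝ)^2) * term n m t) = Eterm n t m := by
  rcases Nat.lt_or_ge (2*m+n) 2 with h | h
  · have h01 : (m = 0 ∧ n = 0) ∨ (m = 0 ∧ n = 1) := by omega
    rcases h01 with ⟨hm, hn⟩ | ⟨hm, hn⟩ <;> subst hm <;> subst hn <;>
      simp [term, d1term, d2term, Eterm, coeff] <;> ring
  · obtain ⟨j, hj⟩ : ∃ j, 2*m+n = j + 2 := ⟨2*m+n-2, by omega⟩
    have e1 : 2*m+n-1 = j+1 := by omega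
    have e2 : 2*m+n-2 = j := by omega
    rw [term, d1term, d2term, Eterm, e1, e2, hj]
    push_cast
    ring

lemma Eterm_zero (n : ℕ) (t : ℝ) : Eterm n t 0 = 0 := by
  simp [Eterm]

lemma Eterm_succ_add (n m : ℕ) (t : ℝ) :
    Eterm n t (m+1) + t^2 * term n m t = 0 := by
  have hkey : coeff n (m+1) * (((2*(m+1)+n : ℕ) : ℝ)^2 - (n:ℝ)^2) = -4 * coeff n m := by
    rw [coeff, coeff]
    have hidx : m+1+n = (m+n)+1 := by omega
    rw [hidx, Nat.factorial_succ (m+n), Nat.factorial_succ m]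
    have hval : (((2*(m+1)+n : ℕ)):ℝ)^2 - (n:ℝ)^2 = 4*((m:ℝ)+1)*((m:ℝ)+(n:ℝ)+1) := by
      push_cast; ring
    rw [hval]
    have hf1 : ((Nat.factorial m : ℝ)) ≠ 0 := by exact_mod_cast (Nat.factorial_pos m).ne'
    have hf2 : ((Nat.factorial (m+n) : ℝ)) ≠ 0 := by exact_mod_cast (Nat.factorial_pos (m+n)).ne'
    have hm1 : ((m:ℝ)+1) ≠ 0 := by positivity
    have hmn1 : ((m:ℝ)+(n:ℝ)+1) ≠ 0 := by positivity
    push_cast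
    field_simp
    ring
  have hidx2 : 2*(m+1)+n = (2*m+n) + 2 := by omega
  rw [Eterm, hidx2, term]
  rw [hidx2] at hkey
  calc coeff n (m+1) * ((((2*m+n)+2 : ℕ):ℝ)^2 - (n:ℝ)^2) * (t/2)^((2*m+n)+2) + t^2 * (coeff n m * (t/2)^(2*m+n))
      = (-4 * coeff n m) * (t/2)^((2*m+n)+2) + t^2 * (coeff n m * (t/2)^(2*m+n)) := by rw [hkey]
    _ = 0 := by rw [pow_add]; ring

lemma summable_Eterm (n : ℕ) (t : ℝ) : Summable (Eterm n t) := by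
  have : Eterm n t = fun m => t^2 * d2term n m t + (t * d1term n m t + (-(n:ℝ)^2) * term n m t) :=
    funext fun m => (combine_eq n m t).symm
  rw [this]
  exact ((summable_d2term n t).mul_left _).add
    (((summable_d1term n t).mul_left _).add ((summable_term n t).mul_left _))

lemma bessel_ode (n : ℕ) (t : ℝ) :
    t^2 * J2 n t + t * J1 n t + (t^2 - (n:ℝ)^2) * besselJ n t = 0 := by
  have S1 : Summable (fun m => t^2 * d2term n m t) := (summable_d2term n t).mul_left _
  have S2 : Summable (fun m => t * d1term n m t) := (summable_d1term n t).mul_left _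
  have S3 : Summable (fun m => (-(n:ℝ)^2) * term n m t) := (summable_term n t).mul_left _
  have S4 : Summable (fun m => t^2 * term n m t) := (summable_term n t).mul_left _
  have SE := summable_Eterm n t
  have SEs : Summable (fun m => Eterm n t (m+1)) := by
    exact (summable_nat_add_iff 1).2 SE
  calc t^2 * J2 n t + t * J1 n t + (t^2 - (n:ℝ)^2) * besselJ n t
      = (t^2 * J2 n t + (t * J1 n t + (-(n:ℝ)^2) * besselJ n t)) + t^2 * besselJ n t := by ring
    _ = (∑' m, (t^2 * d2term n m t + (t * d1term n m t + (-(n:ℝ)^2) * term n m t)))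
        + ∑' m, t^2 * term n m t := by
        rw [J2, J1, besselJ_eq, ← tsum_mul_left, ← tsum_mul_left, ← tsum_mul_left, ← tsum_mul_left,
          ← Summable.tsum_add S2 S3, ← Summable.tsum_add S1 (S2.add S3)]
    _ = (∑' m, Eterm n t m) + ∑' m, t^2 * term n m t := by
        congr 1; exact tsum_congr fun m => combine_eq n m t
    _ = (Eterm n t 0 + ∑' m, Eterm n t (m+1)) + ∑' m, t^2 * term n m t := by
        rw [Summable.tsum_eq_zero_add SE]
    _ = ∑' m, (Eterm n t (m+1) + t^2 * term n m t) := by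
        rw [Eterm_zero, zero_add, Summable.tsum_add SEs S4]
    _ = 0 := by
        simp only [Eterm_succ_add]
        exact tsum_zero

end BesselODE

namespace BesselDecay
open BesselAux BesselAux2 BesselODE Set

lemma two_pow_le_fact (m : ℕ) : (2:ℝ)^m ≤ 2 * Nat.factorial m := by
  induction m with
  | zero => norm_num
  | succ k ih =>
    rw [pow_succ, Nat.factorial_succ]
    push_cast
    rcases Nat.eq_zero_or_pos k with hk | hk
    · subst hk; norm_num
    · have h1 : (1:ℝ) ≤ k := by exact_mod_cast hk
      have h2 : (1:ℝ) ≤ Nat.factorial k := by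
        exact_mod_cast Nat.one_le_iff_ne_zero.2 (Nat.factorial_ne_zero k)
      nlinarith [ih]

lemma abs_besselJ_le_four (n : ℕ) {t : ℝ} (h : |t| ≤ 2) : |besselJ n t| ≤ 4 := by
  have hterm : ∀ m, ‖term n m t‖ ≤ 2 * (1/2:ℝ)^m := by
    intro m
    have h1 := abs_coeff_le n m
    have h2 : |(t/2) ^ (2*m+n)| ≤ 1 := by
      rw [abs_pow]
      apply pow_le_one₀ (abs_nonneg _)
      rw [abs_div, abs_two]; linarith [abs_nonneg t]
    have hf : (0:ℝ) < Nat.factorial m := by exact_mod_cast Nat.factorial_pos m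
    have h3 : (1:ℝ)/Nat.factorial m ≤ 2 * (1/2:ℝ)^m := by
      rw [div_le_iff₀ hf, div_pow, one_pow]
      have hp : (0:ℝ) < 2^m := by positivity
      rw [show (2:ℝ) * (1/2^m) * Nat.factorial m = 2 * Nat.factorial m / 2^m by ring,
        le_div_iff₀ hp, one_mul]
      exact two_pow_le_fact m
    calc ‖term n m t‖ = |coeff n m| * |(t/2) ^ (2*m+n)| := by rw [Real.norm_eq_abs, term, abs_mul]
      _ ≤ (1/Nat.factorial m) * 1 := mul_le_mul h1 h2 (abs_nonneg _) (by positivity)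
      _ ≤ 2 * (1/2:ℝ)^m := by rw [mul_one]; exact h3
  have hsum : Summable (fun m => ‖term n m t‖) :=
    Summable.of_nonneg_of_le (fun m => norm_nonneg _) hterm
      ((summable_geometric_of_lt_one (by norm_num) (by norm_num)).mul_left 2)
  calc |besselJ n t| = ‖∑' m, term n m t‖ := by rw [besselJ_eq, Real.norm_eq_abs]
    _ ≤ ∑' m, ‖term n m t‖ := norm_tsum_le_tsum_norm hsum
    _ ≤ ∑' m, 2 * (1/2:ℝ)^m := Summable.tsum_le_tsum hterm hsum
        ((summable_geometric_of_lt_one (by norm_num) (by norm_num)).mul_left 2)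
    _ = 4 := by
        rw [tsum_mul_left, tsum_geometric_of_lt_one (by norm_num) (by norm_num)]
        norm_num

section energy

variable (n : ℕ)

noncomputable def cc : ℝ := 1/4 - (n:ℝ)^2
noncomputable def uu (t : ℝ) : ℝ := Real.sqrt t * besselJ n t
noncomputable def uu1 (t : ℝ) : ℝ := besselJ n t / (2 * Real.sqrt t) + Real.sqrt t * J1 n t
noncomputable def VV (t : ℝ) : ℝ := (uu n t)^2 + (uu1 n t)^2
noncomputable def WW (t : ℝ) : ℝ := VV n t * Real.exp (|cc n| * t⁻¹)

lemma hasDerivAt_uu {t : ℝ} (ht : 0 < t) : HasDerivAt (uu n) (uu1 n t) t := by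
  have h := (Real.hasDerivAt_sqrt ht.ne').mul (hasDerivAt_besselJ n t)
  refine h.congr_deriv ?_
  rw [uu1]; ring

lemma alg_aux (s J Jp Jpp ν : ℝ) (hs : s ≠ 0)
    (hode : (s^2)^2 * Jpp + s^2 * Jp + ((s^2)^2 - ν) * J = 0) :
    (Jp * (2*s) - J * (2*(1/(2*s))))/(2*s)^2 + (1/(2*s) * Jp + s * Jpp)
      = -(1 + (1/4 - ν)/(s^2)^2) * (s * J) := by
  have hJpp : Jpp = (-(s^2 * Jp) - ((s^2)^2 - ν) * J) / (s^2)^2 := by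
    field_simp
    linarith [hode]
  rw [hJpp]
  field_simp
  ring

lemma hasDerivAt_uu1 {t : ℝ} (ht : 0 < t) :
    HasDerivAt (uu1 n) (-(1 + cc n / t^2) * uu n t) t := by
  have hsne : Real.sqrt t ≠ 0 := by positivity
  have h1 : HasDerivAt (fun t => besselJ n t / (2 * Real.sqrt t))
      ((J1 n t * (2 * Real.sqrt t) - besselJ n t * (2 * (1/(2 * Real.sqrt t)))) / (2 * Real.sqrt t)^2) t :=
    (hasDerivAt_besselJ n t).div ((Real.hasDerivAt_sqrt ht.ne').const_mul 2) (by positivity)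
  have h2 : HasDerivAt (fun t => Real.sqrt t * J1 n t)
      (1/(2 * Real.sqrt t) * J1 n t + Real.sqrt t * J2 n t) t :=
    (Real.hasDerivAt_sqrt ht.ne').mul (hasDerivAt_J1 n t)
  have h := h1.add h2
  refine h.congr_deriv ?_
  have hs : Real.sqrt t ^ 2 = t := Real.sq_sqrt ht.le
  have hode' : ((Real.sqrt t)^2)^2 * J2 n t + (Real.sqrt t)^2 * J1 n t
      + (((Real.sqrt t)^2)^2 - (n:ℝ)^2) * besselJ n t = 0 := by
    rw [hs]; exact bessel_ode n t
  rw [alg_aux (Real.sqrt t) (besselJ n t) (J1 n t) (J2 n t) ((n:ℝ)^2) hsne hode', hs, uu, cc]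

noncomputable def VV' (t : ℝ) : ℝ := -2 * cc n * uu n t * uu1 n t / t^2

lemma hasDerivAt_VV {t : ℝ} (ht : 0 < t) : HasDerivAt (VV n) (VV' n t) t := by
  have h1 := ((hasDerivAt_uu n ht).pow 2).add ((hasDerivAt_uu1 n ht).pow 2)
  refine h1.congr_deriv ?_
  rw [VV']
  have htne : t ≠ 0 := ht.ne'
  field_simp
  ring

noncomputable def WW' (t : ℝ) : ℝ :=
  VV' n t * Real.exp (|cc n| * t⁻¹) + VV n t * (Real.exp (|cc n| * t⁻¹) * (|cc n| * (-(t^2)⁻¹)))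

lemma hasDerivAt_WW {t : ℝ} (ht : 0 < t) : HasDerivAt (WW n) (WW' n t) t := by
  have he : HasDerivAt (fun t : ℝ => Real.exp (|cc n| * t⁻¹))
      (Real.exp (|cc n| * t⁻¹) * (|cc n| * (-(t^2)⁻¹))) t := by
    have hi : HasDerivAt (fun t : ℝ => |cc n| * t⁻¹) (|cc n| * (-(t^2)⁻¹)) t :=
      (hasDerivAt_inv ht.ne').const_mul _
    simpa using hi.exp
  exact (hasDerivAt_VV n ht).mul he

lemma WW'_nonpos {t : ℝ} (ht : 0 < t) : WW' n t ≤ 0 := by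
  have hV : 0 ≤ VV n t := by rw [VV]; positivity
  have hkey : -2 * cc n * uu n t * uu1 n t ≤ |cc n| * VV n t := by
    have h1 : 2 * |uu n t * uu1 n t| ≤ VV n t := by
      rw [VV]
      nlinarith [sq_nonneg (|uu n t| - |uu1 n t|), sq_abs (uu n t), sq_abs (uu1 n t),
        abs_mul (uu n t) (uu1 n t), abs_nonneg (uu n t * uu1 n t)]
    calc -2 * cc n * uu n t * uu1 n t ≤ |(-2 * cc n * uu n t * uu1 n t)| := le_abs_self _
      _ = |cc n| * (2 * |uu n t * uu1 n t|) := by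
          rw [show (-2 * cc n * uu n t * uu1 n t) = (-2 * cc n) * (uu n t * uu1 n t) by ring,
            abs_mul, abs_mul, abs_neg, abs_two, abs_mul]
          ring
      _ ≤ |cc n| * VV n t := by
          apply mul_le_mul_of_nonneg_left h1 (abs_nonneg _)
  have hVle : VV' n t ≤ |cc n| * VV n t / t^2 := by
    rw [VV']
    apply div_le_div_of_nonneg_right hkey (by positivity) |>.trans_eq (by ring)
  rw [WW']
  have hexp : 0 < Real.exp (|cc n| * t⁻¹) := Real.exp_pos _
  have ht2 : (0:ℝ) < t^2 := by positivity
  calc VV' n t * Real.exp (|cc n| * t⁻¹) + VV n t * (Real.exp (|cc n| * t⁻¹) * (|cc n| * (-(t^2)⁻¹)))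
      = (VV' n t - |cc n| * VV n t / t^2) * Real.exp (|cc n| * t⁻¹) := by
        field_simp
        ring
    _ ≤ 0 := mul_nonpos_of_nonpos_of_nonneg (by linarith [hVle]) hexp.le

lemma WW_antitone : AntitoneOn (WW n) (Set.Ici 1) := by
  apply antitoneOn_of_deriv_nonpos (convex_Ici 1)
  · intro t htm
    exact (hasDerivAt_WW n (lt_of_lt_of_le zero_lt_one htm)).continuousAt.continuousWithinAt
  · intro t htm
    rw [interior_Ici] at htm
    exact (hasDerivAt_WW n (lt_trans zero_lt_one htm)).differentiableAt.differentiableWithinAt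
  · intro t htm
    rw [interior_Ici] at htm
    have h0 : 0 < t := lt_trans zero_lt_one htm
    rw [(hasDerivAt_WW n h0).deriv]
    exact WW'_nonpos n h0

end energy

lemma besselJ_decay (n : ℕ) :
    ∃ C : ℝ, 0 < C ∧ ∀ t : ℝ, 0 < t → |besselJ n t| ≤ C * t ^ (-(1/2) : ℝ) := by
  set B : ℝ := Real.sqrt (max (WW n 1) 0) with hB
  refine ⟨max 4 B + 1, by positivity, ?_⟩
  intro t ht
  rcases le_or_gt t 1 with h1 | h1
  · have hb := abs_besselJ_le_four n (t := t) (by rw [abs_of_pos ht]; linarith)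
    have hr : 1 ≤ t ^ (-(1/2) : ℝ) :=
      Real.one_le_rpow_of_pos_of_le_one_of_nonpos ht h1 (by norm_num)
    have hr0 : 0 < t ^ (-(1/2) : ℝ) := Real.rpow_pos_of_pos ht _
    calc |besselJ n t| ≤ 4 := hb
      _ ≤ (max 4 B + 1) * 1 := by
          rw [mul_one]
          calc (4:ℝ) ≤ max 4 B := le_max_left _ _
            _ ≤ max 4 B + 1 := by linarith
      _ ≤ (max 4 B + 1) * t ^ (-(1/2) : ℝ) := by
          apply mul_le_mul_of_nonneg_left hr (by positivity)
  · -- t ≥ 1 : energy argument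
    have ht1 : (1:ℝ) ≤ t := h1.le
    have h0 : (0:ℝ) < t := ht
    have hWle : WW n t ≤ WW n 1 :=
      WW_antitone n (Set.self_mem_Ici) (Set.mem_Ici.2 ht1) ht1
    have hV : VV n t ≤ max (WW n 1) 0 := by
      have hVnn : 0 ≤ VV n t := by rw [VV]; positivity
      have hexp : 1 ≤ Real.exp (|cc n| * t⁻¹) := by
        rw [Real.one_le_exp_iff]
        positivity
      calc VV n t ≤ VV n t * Real.exp (|cc n| * t⁻¹) := le_mul_of_one_le_right hVnn hexp
        _ = WW n t := rfl
        _ ≤ WW n 1 := hWle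
        _ ≤ max (WW n 1) 0 := le_max_left _ _
    have huB : (uu n t)^2 ≤ B^2 := by
      have : (uu n t)^2 ≤ VV n t := by rw [VV]; nlinarith [sq_nonneg (uu1 n t)]
      rw [hB, Real.sq_sqrt (le_max_right _ _)]
      linarith [hV]
    -- uu n t = sqrt t * besselJ n t
    have hsq : t * (besselJ n t)^2 ≤ B^2 := by
      have : (uu n t)^2 = t * (besselJ n t)^2 := by
        rw [uu, mul_pow, Real.sq_sqrt ht.le]
      linarith [huB, this.symm.le]
    have hBnn : 0 ≤ B := Real.sqrt_nonneg _
    have habs : |besselJ n t| ≤ B / Real.sqrt t := by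
      rw [le_div_iff₀ (Real.sqrt_pos.2 ht)]
      have h2 : (|besselJ n t| * Real.sqrt t)^2 ≤ B^2 := by
        rw [mul_pow, sq_abs, Real.sq_sqrt ht.le]
        nlinarith [hsq]
      nlinarith [abs_nonneg (besselJ n t), Real.sqrt_nonneg t, h2, hBnn]
    have hrw : B / Real.sqrt t = B * t ^ (-(1/2) : ℝ) := by
      rw [Real.rpow_neg ht.le, ← Real.sqrt_eq_rpow,
        div_eq_mul_inv]
    have hr0 : 0 < t ^ (-(1/2) : ℝ) := Real.rpow_pos_of_pos ht _
    calc |besselJ n t| ≤ B * t ^ (-(1/2) : ℝ) := by rw [← hrw]; exact habs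
      _ ≤ (max 4 B + 1) * t ^ (-(1/2) : ℝ) := by
          apply mul_le_mul_of_nonneg_right ?_ hr0.le
          calc B ≤ max 4 B := le_max_right _ _
            _ ≤ max 4 B + 1 := by linarith

end BesselDecay


open Real MeasureTheory Filter Metric Set
open scoped ENNReal NNReal

namespace RieszAux

abbrev E2 := EuclideanSpace ℝ (Fin 2)

lemma meas_rpow (a : E2) (s : ℝ) : Measurable (fun x : E2 => ‖x - a‖ ^ (-s)) := by
  fun_prop

lemma rpow_neg_add {x : ℝ} (hx : 0 ≤ x) {p q : ℝ} (hp : 0 ≤ p) (hq : 0 ≤ q) :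
    x ^ (-p) * x ^ (-q) = x ^ (-(p+q)) := by
  rcases eq_or_lt_of_le (add_nonneg hp hq) with h0 | h0
  · have hp0 : p = 0 := by linarith
    have hq0 : q = 0 := by linarith
    simp [hp0, hq0]
  · rw [show (-(p+q)) = (-p) + (-q) by ring, Real.rpow_add' hx (by intro hcon; rw [show -p + -q = -(p+q) by ring] at hcon; simp at hcon; linarith)]

lemma lintegral_bound {s R : ℝ} (hs0 : 0 < s) (hs2 : s < 2) (hR : 0 < R) :
    ∃ Φ : ℝ≥0∞, Φ < ⊤ ∧ ∀ a : E2,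
      ∫⁻ x in closedBall a R, ENNReal.ofReal (‖x - a‖ ^ (-s)) ≤ Φ := by
  set ν := volume (ball (0:E2) 1) with hν
  have hνfin : ν < ⊤ := measure_ball_lt_top
  have hfin2 : ∫⁻ t in Ioi (1:ℝ), ENNReal.ofReal (t ^ (-(2/s))) < ⊤ := by
    apply IntegrableOn.setLIntegral_lt_top
    apply integrableOn_Ioi_rpow_of_lt _ one_pos
    rw [neg_lt_neg_iff, lt_div_iff₀ hs0]
    linarith
  refine ⟨ENNReal.ofReal (R^2) * ν + (∫⁻ t in Ioi (1:ℝ), ENNReal.ofReal (t ^ (-(2/s)))) * ν,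
    ENNReal.add_lt_top.2 ⟨ENNReal.mul_lt_top ENNReal.ofReal_lt_top hνfin,
      ENNReal.mul_lt_top hfin2 hνfin⟩, ?_⟩
  intro a
  set μ := volume.restrict (closedBall a R) with hμ
  have hmeas := meas_rpow a s
  have hset : ∀ t : ℝ, MeasurableSet {x : E2 | t ≤ ‖x - a‖ ^ (-s)} := fun t =>
    measurableSet_le measurable_const hmeas
  rw [lintegral_eq_lintegral_meas_le μ
    (Eventually.of_forall (fun x => Real.rpow_nonneg (norm_nonneg _) _)) hmeas.aemeasurable]
  have huniv : μ Set.univ = ENNReal.ofReal (R^2) * ν := by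
    rw [hμ, Measure.restrict_apply_univ, Measure.addHaar_closedBall volume a hR.le]
    congr 2
    simp [finrank_euclideanSpace_fin]
  calc ∫⁻ t in Ioi (0:ℝ), μ {x | t ≤ ‖x - a‖ ^ (-s)}
      ≤ ∫⁻ t in Ioc (0:ℝ) 1 ∪ Ioi 1, μ {x | t ≤ ‖x - a‖ ^ (-s)} :=
        lintegral_mono_set Ioi_subset_Ioc_union_Ioi
    _ ≤ (∫⁻ t in Ioc (0:ℝ) 1, μ {x | t ≤ ‖x - a‖ ^ (-s)})
        + ∫⁻ t in Ioi (1:ℝ), μ {x | t ≤ ‖x - a‖ ^ (-s)} := lintegral_union_le _ _ _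
    _ ≤ ENNReal.ofReal (R^2) * ν + (∫⁻ t in Ioi (1:ℝ), ENNReal.ofReal (t ^ (-(2/s)))) * ν := by
        gcongr
        · calc ∫⁻ t in Ioc (0:ℝ) 1, μ {x | t ≤ ‖x - a‖ ^ (-s)}
              ≤ ∫⁻ _ in Ioc (0:ℝ) 1, ENNReal.ofReal (R^2) * ν :=
                setLIntegral_mono' measurableSet_Ioc
                  (fun t _ => huniv ▸ measure_mono (subset_univ _))
            _ = ENNReal.ofReal (R^2) * ν * volume (Ioc (0:ℝ) 1) := setLIntegral_const _ _
            _ = ENNReal.ofReal (R^2) * ν := by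
                rw [Real.volume_Ioc]
                norm_num
        · calc ∫⁻ t in Ioi (1:ℝ), μ {x | t ≤ ‖x - a‖ ^ (-s)}
              ≤ ∫⁻ t in Ioi (1:ℝ), ENNReal.ofReal (t ^ (-(2/s))) * ν := by
                apply setLIntegral_mono' measurableSet_Ioi
                intro t ht
                rw [mem_Ioi] at ht
                have hsub : {x : E2 | t ≤ ‖x - a‖ ^ (-s)} ⊆ closedBall a (t ^ (-(1/s))) := by
                  intro x hx
                  simp only [mem_setOf_eq] at hx
                  rcases eq_or_ne x a with rfl | hxa
                  · rw [sub_self, norm_zero,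
                      Real.zero_rpow (by simp; positivity)] at hx
                    linarith
                  · have hr : 0 < ‖x - a‖ := by
                      rw [norm_pos_iff, sub_ne_zero]; exact hxa
                    rw [mem_closedBall, dist_eq_norm]
                    have h1 : (‖x - a‖ ^ (-s)) ^ (-(1/s)) ≤ t ^ (-(1/s)) :=
                      antitoneOn_rpow_Ioi_of_exponent_nonpos (by simp; positivity)
                        (mem_Ioi.2 (by linarith))
                        (mem_Ioi.2 (lt_of_lt_of_le (by linarith) hx)) hx
                    rwa [← Real.rpow_mul hr.le,
                      show (-s) * (-(1/s)) = 1 by field_simp, Real.rpow_one] at h1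
                calc μ {x | t ≤ ‖x - a‖ ^ (-s)}
                    ≤ volume (closedBall a (t ^ (-(1/s)))) := by
                      rw [hμ, Measure.restrict_apply (hset t)]
                      exact measure_mono (inter_subset_left.trans hsub)
                  _ = ENNReal.ofReal (t ^ (-(2/s))) * ν := by
                      rw [Measure.addHaar_closedBall volume a (Real.rpow_nonneg (by linarith) _)]
                      congr 2
                      rw [finrank_euclideanSpace_fin, ← Real.rpow_natCast (t ^ (-(1/s))) 2,
                        ← Real.rpow_mul (by linarith : (0:ℝ) ≤ t)]
                      rw [show (-(1/s)) * ((2:ℕ):ℝ) = -(2/s) by push_cast; ring]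
            _ = (∫⁻ t in Ioi (1:ℝ), ENNReal.ofReal (t ^ (-(2/s)))) * ν :=
                lintegral_mul_const' _ _ hνfin.ne

lemma riesz₁ {s R : ℝ} (hs0 : 0 ≤ s) (hs2 : s < 2) (hR : 0 < R) :
    ∃ K : ℝ, 0 ≤ K ∧ ∀ (a : E2) (A : Set E2), MeasurableSet A → A ⊆ closedBall a R →
      IntegrableOn (fun x => ‖x - a‖ ^ (-s)) A volume ∧
      ∫ x in A, ‖x - a‖ ^ (-s) ≤ K := by
  rcases eq_or_lt_of_le hs0 with h0 | h0
  · -- s = 0 : integrand is 1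
    subst h0
    refine ⟨(ENNReal.ofReal (R^2) * volume (ball (0:E2) 1)).toReal, ENNReal.toReal_nonneg, ?_⟩
    intro a A hAm hAsub
    have hint : IntegrableOn (fun _ : E2 => (1:ℝ)) A volume := by
      exact integrableOn_const (lt_of_le_of_lt (measure_mono hAsub) measure_closedBall_lt_top).ne
    constructor
    · simpa using hint
    · have : ∫ x in A, ‖x - a‖ ^ (-(0:ℝ)) = (volume A).toReal := by
        simp [Real.rpow_zero, Measure.real]
      rw [this]
      have h1 : volume A ≤ ENNReal.ofReal (R^2) * volume (ball (0:E2) 1) := by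
        calc volume A ≤ volume (closedBall a R) := measure_mono hAsub
          _ = _ := by
            rw [Measure.addHaar_closedBall volume a hR.le]
            congr 2
            simp [finrank_euclideanSpace_fin]
      exact ENNReal.toReal_mono (ENNReal.mul_lt_top ENNReal.ofReal_lt_top measure_ball_lt_top).ne h1
  · obtain ⟨Φ, hΦtop, hΦ⟩ := lintegral_bound h0 hs2 hR
    refine ⟨Φ.toReal, ENNReal.toReal_nonneg, ?_⟩
    intro a A hAm hAsub
    have hmeas := meas_rpow a s
    have hball : IntegrableOn (fun x => ‖x - a‖ ^ (-s)) (closedBall a R) volume := by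
      constructor
      · exact hmeas.aestronglyMeasurable
      · rw [HasFiniteIntegral,
          lintegral_enorm_of_nonneg (fun x => Real.rpow_nonneg (norm_nonneg _) _)]
        exact lt_of_le_of_lt (hΦ a) hΦtop
    refine ⟨hball.mono_set hAsub, ?_⟩
    calc ∫ x in A, ‖x - a‖ ^ (-s)
        ≤ ∫ x in closedBall a R, ‖x - a‖ ^ (-s) := by
          apply setIntegral_mono_set hball
            (Eventually.of_forall (fun x => Real.rpow_nonneg (norm_nonneg _) _))
            (HasSubset.Subset.eventuallyLE hAsub)
      _ = (∫⁻ x in closedBall a R, ENNReal.ofReal (‖x - a‖ ^ (-s))).toReal := by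
          rw [integral_eq_lintegral_of_nonneg_ae
            (Eventually.of_forall (fun x => Real.rpow_nonneg (norm_nonneg _) _))
            hmeas.aestronglyMeasurable]
      _ ≤ Φ.toReal := ENNReal.toReal_mono hΦtop.ne (hΦ a)


lemma riesz₂ {s s' R : ℝ} (hs0 : 0 ≤ s) (hs32 : s ≤ 3/2) (hs'0 : 0 ≤ s') (hs'32 : s' ≤ 3/2)
    (hR : 0 < R) :
    ∃ K : ℝ, 0 ≤ K ∧ ∀ (a c : E2) (A : Set E2), MeasurableSet A → A ⊆ closedBall a R →
      A ⊆ closedBall c R → (a ≠ c ∨ s + s' ≤ 7/4) →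
      IntegrableOn (fun x => ‖x - a‖ ^ (-s) * ‖x - c‖ ^ (-s')) A volume ∧
      ∫ x in A, ‖x - a‖ ^ (-s) * ‖x - c‖ ^ (-s')
        ≤ K * ‖a - c‖ ^ (-(max (s + s' - 7/4) 0)) := by
  set σ : ℝ := min (s + s') (7/4) with hσdef
  set θ : ℝ := max (s + s' - 7/4) 0 with hθdef
  have hθ0 : 0 ≤ θ := le_max_right _ _
  have hθ74 : θ ≤ 7/4 := by
    rw [hθdef]; apply max_le (by linarith) (by norm_num)
  have hθs : θ ≤ s := by
    rw [hθdef]; apply max_le (by linarith) hs0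
  have hθs' : θ ≤ s' := by
    rw [hθdef]; apply max_le (by linarith) hs'0
  have hσ0 : 0 ≤ σ := le_min (by linarith) (by norm_num)
  have hσ2 : σ < 2 := lt_of_le_of_lt (min_le_right _ _) (by norm_num)
  have hθσ : s + (s' - θ) = σ := by
    rcases le_total (s + s') (7/4) with h | h
    · rw [hθdef, hσdef, max_eq_right (by linarith), min_eq_left h]; ring
    · rw [hθdef, hσdef, max_eq_left (by linarith), min_eq_right h]; ring
  obtain ⟨K₁, hK₁0, hK₁⟩ := riesz₁ hσ0 hσ2 hR
  have hpow2 : (0:ℝ) ≤ (2:ℝ) ^ (7/4:ℝ) := Real.rpow_nonneg (by norm_num) _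
  refine ⟨2 * (2:ℝ)^(7/4:ℝ) * K₁ + K₁, by positivity, ?_⟩
  intro a c A hAm hAa hAc hcase
  set S : Set E2 := {x : E2 | ‖x - a‖ ≤ ‖x - c‖} with hSdef
  have hSm : MeasurableSet S :=
    (isClosed_le ((continuous_id.sub continuous_const).norm)
      ((continuous_id.sub continuous_const).norm)).measurableSet
  rcases eq_or_ne a c with rfl | hac
  · -- a = c
    have hsum74 : s + s' ≤ 7/4 := hcase.resolve_left (by simp)
    have hσeq : σ = s + s' := min_eq_left hsum74
    have hθeq : θ = 0 := max_eq_right (by linarith)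
    obtain ⟨hint, hle⟩ := hK₁ a A hAm hAa
    have hfun : (fun x : E2 => ‖x - a‖ ^ (-s) * ‖x - a‖ ^ (-s'))
        = (fun x : E2 => ‖x - a‖ ^ (-σ)) := by
      funext x
      rw [rpow_neg_add (norm_nonneg _) hs0 hs'0, hσeq]
    rw [hfun]
    refine ⟨hint, ?_⟩
    rw [hθeq, sub_self, norm_zero, neg_zero, Real.rpow_zero, mul_one]
    have h0 : 0 ≤ 2 * (2:ℝ)^(7/4:ℝ) * K₁ := by positivity
    linarith [hle]
  · -- a ≠ c
    have hd : 0 < ‖a - c‖ := by rw [norm_pos_iff, sub_ne_zero]; exact hac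
    have hd2 : 0 < ‖a - c‖ / 2 := by linarith
    have hhalf : ((‖a - c‖/2) : ℝ) ^ (-θ) = 2^θ * ‖a - c‖ ^ (-θ) := by
      rw [Real.div_rpow hd.le (by norm_num : (0:ℝ) ≤ 2),
        Real.rpow_neg (by norm_num : (0:ℝ) ≤ 2), div_eq_mul_inv, inv_inv]
      ring
    have hdθ : (0:ℝ) ≤ ‖a - c‖ ^ (-θ) := Real.rpow_nonneg hd.le _
    have h2θ : (2:ℝ)^θ ≤ (2:ℝ)^(7/4:ℝ) := Real.rpow_le_rpow_of_exponent_le (by norm_num) hθ74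
    have h2θ0 : (0:ℝ) ≤ (2:ℝ)^θ := Real.rpow_nonneg (by norm_num) _
    set A₁ := A ∩ S with hA₁def
    set A₂ := A \ S with hA₂def
    have hA₁m : MeasurableSet A₁ := hAm.inter hSm
    have hA₂m : MeasurableSet A₂ := hAm.diff hSm
    have hmeasf : Measurable (fun x : E2 => ‖x - a‖ ^ (-s) * ‖x - c‖ ^ (-s')) :=
      (meas_rpow a s).mul (meas_rpow c s')
    have hfnn : ∀ x : E2, 0 ≤ ‖x - a‖ ^ (-s) * ‖x - c‖ ^ (-s') := fun x => by positivity
    -- bound on A₁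
    obtain ⟨hg₁int, hg₁le⟩ := hK₁ a A₁ hA₁m (inter_subset_left.trans hAa)
    have hbd₁ : ∀ᵐ x ∂(volume.restrict A₁), ‖x - a‖ ^ (-s) * ‖x - c‖ ^ (-s')
        ≤ (2^θ * ‖a - c‖ ^ (-θ)) * ‖x - a‖ ^ (-σ) := by
      have hae : ∀ᵐ x ∂(volume.restrict A₁), x ≠ a := by
        refine ae_restrict_of_ae ?_
        have : volume ({a} : Set E2) = 0 := measure_singleton a
        rw [ae_iff]
        simpa using this
      filter_upwards [ae_restrict_mem hA₁m, hae] with x hx hxa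
      have hxS : ‖x - a‖ ≤ ‖x - c‖ := hx.2
      have hxa0 : 0 < ‖x - a‖ := by rw [norm_pos_iff, sub_ne_zero]; exact hxa
      have hxc1 : ‖a - c‖ ≤ 2 * ‖x - c‖ := by
        have htri : ‖a - c‖ ≤ ‖a - x‖ + ‖x - c‖ := norm_sub_le_norm_sub_add_norm_sub a x c
        rw [norm_sub_rev a x] at htri
        linarith
      have hxc0 : 0 < ‖x - c‖ := by linarith
      calc ‖x - a‖ ^ (-s) * ‖x - c‖ ^ (-s')
          = ‖x - a‖ ^ (-s) * (‖x - c‖ ^ (-θ) * ‖x - c‖ ^ (-(s' - θ))) := by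
            rw [rpow_neg_add hxc0.le hθ0 (by linarith), show θ + (s' - θ) = s' by ring]
        _ ≤ ‖x - a‖ ^ (-s) * ((‖a - c‖/2) ^ (-θ) * ‖x - a‖ ^ (-(s' - θ))) := by
            apply mul_le_mul_of_nonneg_left ?_ (Real.rpow_nonneg (norm_nonneg _) _)
            apply mul_le_mul
            · exact antitoneOn_rpow_Ioi_of_exponent_nonpos (by linarith)
                (mem_Ioi.2 hd2) (mem_Ioi.2 hxc0) (by linarith)
            · exact antitoneOn_rpow_Ioi_of_exponent_nonpos (by linarith)
                (mem_Ioi.2 hxa0) (mem_Ioi.2 hxc0) hxS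
            · exact Real.rpow_nonneg (norm_nonneg _) _
            · exact Real.rpow_nonneg hd2.le _
        _ = (‖a - c‖/2) ^ (-θ) * (‖x - a‖ ^ (-s) * ‖x - a‖ ^ (-(s' - θ))) := by ring
        _ = (2^θ * ‖a - c‖ ^ (-θ)) * ‖x - a‖ ^ (-σ) := by
            rw [rpow_neg_add hxa0.le hs0 (by linarith), hθσ, hhalf]
    have hfint₁ : IntegrableOn (fun x : E2 => ‖x - a‖ ^ (-s) * ‖x - c‖ ^ (-s')) A₁ volume := by
      apply Integrable.mono' (hg₁int.const_mul (2^θ * ‖a - c‖ ^ (-θ)))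
        hmeasf.aestronglyMeasurable
      filter_upwards [hbd₁] with x hx
      rw [Real.norm_eq_abs, abs_of_nonneg (hfnn x)]
      exact hx
    have hI₁ : ∫ x in A₁, ‖x - a‖ ^ (-s) * ‖x - c‖ ^ (-s')
        ≤ (2^θ * ‖a - c‖ ^ (-θ)) * K₁ := by
      calc ∫ x in A₁, ‖x - a‖ ^ (-s) * ‖x - c‖ ^ (-s')
          ≤ ∫ x in A₁, (2^θ * ‖a - c‖ ^ (-θ)) * ‖x - a‖ ^ (-σ) :=
            integral_mono_ae hfint₁ (hg₁int.const_mul _) hbd₁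
        _ = (2^θ * ‖a - c‖ ^ (-θ)) * ∫ x in A₁, ‖x - a‖ ^ (-σ) := integral_const_mul _ _
        _ ≤ (2^θ * ‖a - c‖ ^ (-θ)) * K₁ :=
            mul_le_mul_of_nonneg_left hg₁le (by positivity)
    -- bound on A₂
    obtain ⟨hg₂int, hg₂le⟩ := hK₁ c A₂ hA₂m ((diff_subset).trans hAc)
    have hbd₂ : ∀ᵐ x ∂(volume.restrict A₂), ‖x - a‖ ^ (-s) * ‖x - c‖ ^ (-s')
        ≤ (2^θ * ‖a - c‖ ^ (-θ)) * ‖x - c‖ ^ (-σ) := by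
      have hae : ∀ᵐ x ∂(volume.restrict A₂), x ≠ c := by
        refine ae_restrict_of_ae ?_
        have : volume ({c} : Set E2) = 0 := measure_singleton c
        rw [ae_iff]
        simpa using this
      filter_upwards [ae_restrict_mem hA₂m, hae] with x hx hxc
      have hxS : ‖x - c‖ < ‖x - a‖ := by
        have := hx.2
        rw [hSdef] at this
        simpa using not_le.1 this
      have hxc0 : 0 < ‖x - c‖ := by rw [norm_pos_iff, sub_ne_zero]; exact hxc
      have hxa0 : 0 < ‖x - a‖ := by linarith
      have hxa1 : ‖a - c‖ ≤ 2 * ‖x - a‖ := by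
        have htri : ‖a - c‖ ≤ ‖a - x‖ + ‖x - c‖ := norm_sub_le_norm_sub_add_norm_sub a x c
        rw [norm_sub_rev a x] at htri
        linarith
      calc ‖x - a‖ ^ (-s) * ‖x - c‖ ^ (-s')
          = (‖x - a‖ ^ (-θ) * ‖x - a‖ ^ (-(s - θ))) * ‖x - c‖ ^ (-s') := by
            rw [rpow_neg_add hxa0.le hθ0 (by linarith), show θ + (s - θ) = s by ring]
        _ ≤ ((‖a - c‖/2) ^ (-θ) * ‖x - c‖ ^ (-(s - θ))) * ‖x - c‖ ^ (-s') := by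
            apply mul_le_mul_of_nonneg_right ?_ (Real.rpow_nonneg (norm_nonneg _) _)
            apply mul_le_mul
            · exact antitoneOn_rpow_Ioi_of_exponent_nonpos (by linarith)
                (mem_Ioi.2 hd2) (mem_Ioi.2 hxa0) (by linarith)
            · exact antitoneOn_rpow_Ioi_of_exponent_nonpos (by linarith)
                (mem_Ioi.2 hxc0) (mem_Ioi.2 hxa0) hxS.le
            · exact Real.rpow_nonneg (norm_nonneg _) _
            · exact Real.rpow_nonneg hd2.le _
        _ = (‖a - c‖/2) ^ (-θ) * (‖x - c‖ ^ (-(s - θ)) * ‖x - c‖ ^ (-s')) := by ring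
        _ = (2^θ * ‖a - c‖ ^ (-θ)) * ‖x - c‖ ^ (-σ) := by
            rw [rpow_neg_add hxc0.le (by linarith) hs'0,
              show (s - θ) + s' = s + (s' - θ) by ring, hθσ, hhalf]
    have hfint₂ : IntegrableOn (fun x : E2 => ‖x - a‖ ^ (-s) * ‖x - c‖ ^ (-s')) A₂ volume := by
      apply Integrable.mono' (hg₂int.const_mul (2^θ * ‖a - c‖ ^ (-θ)))
        hmeasf.aestronglyMeasurable
      filter_upwards [hbd₂] with x hx
      rw [Real.norm_eq_abs, abs_of_nonneg (hfnn x)]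
      exact hx
    have hI₂ : ∫ x in A₂, ‖x - a‖ ^ (-s) * ‖x - c‖ ^ (-s')
        ≤ (2^θ * ‖a - c‖ ^ (-θ)) * K₁ := by
      calc ∫ x in A₂, ‖x - a‖ ^ (-s) * ‖x - c‖ ^ (-s')
          ≤ ∫ x in A₂, (2^θ * ‖a - c‖ ^ (-θ)) * ‖x - c‖ ^ (-σ) :=
            integral_mono_ae hfint₂ (hg₂int.const_mul _) hbd₂
        _ = (2^θ * ‖a - c‖ ^ (-θ)) * ∫ x in A₂, ‖x - c‖ ^ (-σ) := integral_const_mul _ _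
        _ ≤ (2^θ * ‖a - c‖ ^ (-θ)) * K₁ :=
            mul_le_mul_of_nonneg_left hg₂le (by positivity)
    -- combine
    have hA12 : A = A₁ ∪ A₂ := (inter_union_diff A S).symm
    have hdisj : Disjoint A₁ A₂ :=
      Disjoint.mono_left inter_subset_right disjoint_sdiff_self_right
    constructor
    · rw [hA12]
      exact hfint₁.union hfint₂
    · rw [hA12, setIntegral_union hdisj hA₂m hfint₁ hfint₂]
      have hKnn : 0 ≤ 2^θ * ‖a - c‖ ^ (-θ) * K₁ := by positivity
      calc (∫ x in A₁, ‖x - a‖ ^ (-s) * ‖x - c‖ ^ (-s'))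
            + ∫ x in A₂, ‖x - a‖ ^ (-s) * ‖x - c‖ ^ (-s')
          ≤ 2 * (2^θ * ‖a - c‖ ^ (-θ) * K₁) := by linarith [hI₁, hI₂]
        _ ≤ (2 * (2:ℝ)^(7/4:ℝ) * K₁ + K₁) * ‖a - c‖ ^ (-θ) := by
            nlinarith [mul_le_mul_of_nonneg_right (mul_le_mul_of_nonneg_right h2θ hdθ) hK₁0,
              mul_nonneg hdθ hK₁0]

end RieszAux

open scoped ENNReal

set_option maxHeartbeats 1000000 in
/-- Contraction bound: for exponents `1 ≤ bᵢ ≤ 3` with `b₁+b₂+b₃+b₄ = 8` and Bessel orders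
`aᵢ ∈ {0,1,2}`, the renormalized fourfold cyclic integral
`u_E = (E²/log²E) ∫_{D⁴} ∏ |J_{aᵢ}(2π√E‖xᵢ − xᵢ₊₁‖)|^{bᵢ}` tends to `0` as `E → ∞`,
where `D ⊂ ℝ²` is a convex body. -/
theorem contraction_integral_tendsto_zero
    (D : Set (EuclideanSpace ℝ (Fin 2))) (hDcomp : IsCompact D) (hDconv : Convex ℝ D)
    (hDint : (interior D).Nonempty)
    (a₁ a₂ a₃ a₄ : ℕ) (ha₁ : a₁ ≤ 2) (ha₂ : a₂ ≤ 2) (ha₃ : a₃ ≤ 2) (ha₄ : a₄ ≤ 2)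
    (b₁ b₂ b₃ b₄ : ℕ)
    (hb₁ : 1 ≤ b₁) (hb₂ : 1 ≤ b₂) (hb₃ : 1 ≤ b₃) (hb₄ : 1 ≤ b₄)
    (hb₁' : b₁ ≤ 3) (hb₂' : b₂ ≤ 3) (hb₃' : b₃ ≤ 3) (hb₄' : b₄ ≤ 3)
    (hsum : b₁ + b₂ + b₃ + b₄ = 8) :
    Tendsto (fun E : ℝ =>
        (E ^ 2 / (Real.log E) ^ 2) *
          ∫ x₁ in D, ∫ x₂ in D, ∫ x₃ in D, ∫ x₄ in D,
            |besselJ a₁ (2 * Real.pi * Real.sqrt E * ‖x₁ - x₂‖)| ^ b₁ *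
            |besselJ a₂ (2 * Real.pi * Real.sqrt E * ‖x₂ - x₃‖)| ^ b₂ *
            |besselJ a₃ (2 * Real.pi * Real.sqrt E * ‖x₃ - x₄‖)| ^ b₃ *
            |besselJ a₄ (2 * Real.pi * Real.sqrt E * ‖x₄ - x₁‖)| ^ b₄)
      atTop (nhds 0) := by
  classical
  obtain ⟨C₁, hC₁0, hC₁⟩ := BesselDecay.besselJ_decay a₁
  obtain ⟨C₂, hC₂0, hC₂⟩ := BesselDecay.besselJ_decay a₂
  obtain ⟨C₃, hC₃0, hC₃⟩ := BesselDecay.besselJ_decay a₃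
  obtain ⟨C₄, hC₄0, hC₄⟩ := BesselDecay.besselJ_decay a₄
  have hDb : Bornology.IsBounded D := hDcomp.isBounded
  set R : ℝ := Metric.diam D + 1 with hRdef
  have hR : 0 < R := by
    have := Metric.diam_nonneg (s := D)
    rw [hRdef]; linarith
  have hDball : ∀ x ∈ D, D ⊆ closedBall x R := by
    intro x hx y hy
    rw [mem_closedBall]
    calc dist y x ≤ Metric.diam D := Metric.dist_le_diam_of_mem hDb hy hx
      _ ≤ R := by rw [hRdef]; linarith
  have hDm : MeasurableSet D := hDcomp.isClosed.measurableSet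
  set s₁ : ℝ := (b₁:ℝ)/2 with hs₁def
  set s₂ : ℝ := (b₂:ℝ)/2 with hs₂def
  set s₃ : ℝ := (b₃:ℝ)/2 with hs₃def
  set s₄ : ℝ := (b₄:ℝ)/2 with hs₄def
  have hcast : ∀ {b : ℕ}, 1 ≤ b → b ≤ 3 → (1:ℝ)/2 ≤ (b:ℝ)/2 ∧ (b:ℝ)/2 ≤ 3/2 := by
    intro b h1 h3
    have h1' : (1:ℝ) ≤ b := by exact_mod_cast h1
    have h3' : (b:ℝ) ≤ 3 := by exact_mod_cast h3
    exact ⟨by linarith, by linarith⟩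
  obtain ⟨hs₁l, hs₁u⟩ := hcast hb₁ hb₁'
  obtain ⟨hs₂l, hs₂u⟩ := hcast hb₂ hb₂'
  obtain ⟨hs₃l, hs₃u⟩ := hcast hb₃ hb₃'
  obtain ⟨hs₄l, hs₄u⟩ := hcast hb₄ hb₄'
  have hsums : s₁ + s₂ + s₃ + s₄ = 4 := by
    rw [hs₁def, hs₂def, hs₃def, hs₄def]
    have : ((b₁ + b₂ + b₃ + b₄ : ℕ) : ℝ) = 8 := by rw [hsum]; norm_num
    push_cast at this
    linarith
  have hθ0 : 0 ≤ max (s₃ + s₄ - 7/4) 0 := le_max_right _ _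
  have hθu : max (s₃ + s₄ - 7/4) 0 ≤ 3/2 := max_le (by linarith) (by norm_num)
  have harith1 : s₂ + max (s₃ + s₄ - 7/4) 0 ≤ 7/4 := by
    rcases le_total (s₃ + s₄) (7/4) with h | h
    · rw [max_eq_right (by linarith)]; linarith
    · rw [max_eq_left (by linarith)]; linarith
  obtain ⟨K₂, hK₂0, hK₂⟩ := RieszAux.riesz₂ (s := s₃) (s' := s₄)
    (by linarith) hs₃u (by linarith) hs₄u hR
  obtain ⟨K₃, hK₃0, hK₃⟩ := RieszAux.riesz₂ (s := s₂) (s' := max (s₃ + s₄ - 7/4) 0)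
    (by linarith) hs₂u hθ0 hθu hR
  obtain ⟨K₄, hK₄0, hK₄⟩ := RieszAux.riesz₁ (s := s₁) (by linarith) (by linarith) hR
  have harith2 : max (s₂ + max (s₃ + s₄ - 7/4) 0 - 7/4) 0 = 0 := max_eq_right (by linarith)
  set Ctot : ℝ :=
    (volume D).toReal * ((C₁^b₁ * (C₂^b₂ * (C₃^b₃ * C₄^b₄ * K₂) * K₃)) * K₄) with hCtotdef
  have hCtot0 : 0 ≤ Ctot := by
    rw [hCtotdef]
    have := ENNReal.toReal_nonneg (a := volume D)
    positivity
  set Mtot : ℝ := Ctot / (16 * π^4) with hMtotdef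
  apply tendsto_of_tendsto_of_tendsto_of_le_of_le'
    (g := fun _ : ℝ => (0:ℝ)) (h := fun E : ℝ => Mtot / (Real.log E)^2)
    tendsto_const_nhds
  · -- Mtot / log² → 0
    apply Tendsto.div_atTop (tendsto_const_nhds)
    exact (tendsto_pow_atTop (two_ne_zero)).comp Real.tendsto_log_atTop
  · -- lower bound 0 ≤ u E
    filter_upwards with E
    apply mul_nonneg (by positivity)
    apply setIntegral_nonneg hDm
    intro x₁ _
    apply setIntegral_nonneg hDm
    intro x₂ _
    apply setIntegral_nonneg hDm
    intro x₃ _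
    apply setIntegral_nonneg hDm
    intro x₄ _
    positivity
  · -- upper bound
    filter_upwards [eventually_ge_atTop (2:ℝ)] with E hE2
    have hE0 : (0:ℝ) < E := by linarith
    have hE1 : (1:ℝ) < E := by linarith
    set l : ℝ := 2 * π * Real.sqrt E with hl
    have hsq : 0 < Real.sqrt E := Real.sqrt_pos.2 hE0
    have hl0 : 0 < l := by rw [hl]; positivity
    -- pointwise Bessel bound
    have key : ∀ (n b : ℕ) (C : ℝ), 0 ≤ C →
        (∀ t : ℝ, 0 < t → |besselJ n t| ≤ C * t ^ (-(1/2) : ℝ)) →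
        ∀ x y : EuclideanSpace ℝ (Fin 2), x ≠ y →
        |besselJ n (l * ‖x - y‖)| ^ b
          ≤ C^b * (l ^ (-((b:ℝ)/2)) * ‖x - y‖ ^ (-((b:ℝ)/2))) := by
      intro n b C hC0 hC x y hxy
      have hn0 : 0 < ‖x - y‖ := by rw [norm_pos_iff, sub_ne_zero]; exact hxy
      have ht0 : 0 < l * ‖x - y‖ := mul_pos hl0 hn0
      calc |besselJ n (l * ‖x - y‖)| ^ b
          ≤ (C * (l * ‖x - y‖) ^ (-(1/2) : ℝ)) ^ b :=
            pow_le_pow_left₀ (abs_nonneg _) (hC _ ht0) b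
        _ = C^b * ((l * ‖x - y‖) ^ (-(1/2) : ℝ)) ^ b := mul_pow _ _ _
        _ = C^b * (l * ‖x - y‖) ^ (-((b:ℝ)/2)) := by
            rw [← Real.rpow_natCast ((l * ‖x - y‖) ^ (-(1/2) : ℝ)) b,
              ← Real.rpow_mul ht0.le, show (-(1/2) : ℝ) * (b:ℝ) = -((b:ℝ)/2) by ring]
        _ = C^b * (l ^ (-((b:ℝ)/2)) * ‖x - y‖ ^ (-((b:ℝ)/2))) := by
            rw [Real.mul_rpow hl0.le hn0.le]
    have hae_ne : ∀ z : EuclideanSpace ℝ (Fin 2), ∀ᵐ x ∂(volume.restrict D), x ≠ z := by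
      intro z
      have hz : volume ({z} : Set (EuclideanSpace ℝ (Fin 2))) = 0 := measure_singleton z
      refine ae_restrict_of_ae ?_
      rw [ae_iff]
      simpa using hz
    -- nonnegativity helpers
    have hC₁b : (0:ℝ) ≤ C₁^b₁ := pow_nonneg hC₁0.le _
    have hC₂b : (0:ℝ) ≤ C₂^b₂ := pow_nonneg hC₂0.le _
    have hC₃b : (0:ℝ) ≤ C₃^b₃ := pow_nonneg hC₃0.le _
    have hC₄b : (0:ℝ) ≤ C₄^b₄ := pow_nonneg hC₄0.le _
    have hlr : ∀ r : ℝ, (0:ℝ) ≤ l ^ (-r) := fun r => Real.rpow_nonneg hl0.le _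
    -- Layer 4
    have L4 : ∀ x₁ x₂ x₃ : EuclideanSpace ℝ (Fin 2), x₁ ∈ D → x₃ ∈ D → x₃ ≠ x₁ →
        ‖∫ x₄ in D,
            |besselJ a₁ (l * ‖x₁ - x₂‖)| ^ b₁ * |besselJ a₂ (l * ‖x₂ - x₃‖)| ^ b₂ *
            |besselJ a₃ (l * ‖x₃ - x₄‖)| ^ b₃ * |besselJ a₄ (l * ‖x₄ - x₁‖)| ^ b₄‖
          ≤ |besselJ a₁ (l * ‖x₁ - x₂‖)| ^ b₁ * |besselJ a₂ (l * ‖x₂ - x₃‖)| ^ b₂ *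
            ((C₃^b₃ * C₄^b₄ * K₂) * l ^ (-(s₃ + s₄)) *
              ‖x₃ - x₁‖ ^ (-(max (s₃ + s₄ - 7/4) 0))) := by
      intro x₁ x₂ x₃ hx₁ hx₃ hne
      obtain ⟨hker_int, hker_le⟩ := hK₂ x₃ x₁ D hDm (hDball x₃ hx₃) (hDball x₁ hx₁) (Or.inl hne)
      set g₁ := |besselJ a₁ (l * ‖x₁ - x₂‖)| ^ b₁ with hg₁def
      set g₂ := |besselJ a₂ (l * ‖x₂ - x₃‖)| ^ b₂ with hg₂def
      have hg₁ : 0 ≤ g₁ := by rw [hg₁def]; positivity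
      have hg₂ : 0 ≤ g₂ := by rw [hg₂def]; positivity
      set α : ℝ := g₁ * g₂ * (C₃^b₃ * C₄^b₄ * l ^ (-(s₃ + s₄))) with hα
      have hα0 : 0 ≤ α := by
        rw [hα]
        exact mul_nonneg (mul_nonneg hg₁ hg₂)
          (mul_nonneg (mul_nonneg hC₃b hC₄b) (hlr _))
      have hbound : ∀ᵐ x₄ ∂(volume.restrict D),
          ‖g₁ * g₂ * |besselJ a₃ (l * ‖x₃ - x₄‖)| ^ b₃ * |besselJ a₄ (l * ‖x₄ - x₁‖)| ^ b₄‖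
            ≤ α * (‖x₄ - x₃‖ ^ (-s₃) * ‖x₄ - x₁‖ ^ (-s₄)) := by
        filter_upwards [hae_ne x₃, hae_ne x₁] with x₄ h₄₃ h₄₁
        have hb₃ := key a₃ b₃ C₃ hC₃0.le hC₃ x₃ x₄ (Ne.symm h₄₃)
        have hb₄ := key a₄ b₄ C₄ hC₄0.le hC₄ x₄ x₁ h₄₁
        rw [← hs₃def] at hb₃
        rw [← hs₄def] at hb₄
        rw [Real.norm_eq_abs, abs_of_nonneg (by positivity)]
        calc g₁ * g₂ * |besselJ a₃ (l * ‖x₃ - x₄‖)| ^ b₃ * |besselJ a₄ (l * ‖x₄ - x₁‖)| ^ b₄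
            ≤ g₁ * g₂ * (C₃^b₃ * (l ^ (-s₃) * ‖x₃ - x₄‖ ^ (-s₃)))
                * (C₄^b₄ * (l ^ (-s₄) * ‖x₄ - x₁‖ ^ (-s₄))) := by
              apply mul_le_mul
                (mul_le_mul_of_nonneg_left hb₃ (mul_nonneg hg₁ hg₂))
                hb₄ (by positivity)
              have h1 : (0:ℝ) ≤ ‖x₃ - x₄‖ ^ (-s₃) := Real.rpow_nonneg (norm_nonneg _) _
              have h2 : (0:ℝ) ≤ l ^ (-s₃) := hlr _
              exact mul_nonneg (mul_nonneg hg₁ hg₂) (mul_nonneg hC₃b (mul_nonneg h2 h1))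
          _ = α * (‖x₄ - x₃‖ ^ (-s₃) * ‖x₄ - x₁‖ ^ (-s₄)) := by
              rw [hα, norm_sub_rev x₄ x₃,
                show l ^ (-(s₃ + s₄)) = l ^ (-s₃) * l ^ (-s₄) from
                  (RieszAux.rpow_neg_add hl0.le (by linarith) (by linarith)).symm]
              ring
      calc ‖∫ x₄ in D,
            g₁ * g₂ * |besselJ a₃ (l * ‖x₃ - x₄‖)| ^ b₃ * |besselJ a₄ (l * ‖x₄ - x₁‖)| ^ b₄‖
          ≤ ∫ x₄ in D, α * (‖x₄ - x₃‖ ^ (-s₃) * ‖x₄ - x₁‖ ^ (-s₄)) :=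
            norm_integral_le_of_norm_le (hker_int.const_mul α) hbound
        _ = α * ∫ x₄ in D, ‖x₄ - x₃‖ ^ (-s₃) * ‖x₄ - x₁‖ ^ (-s₄) := integral_const_mul _ _
        _ ≤ α * (K₂ * ‖x₃ - x₁‖ ^ (-(max (s₃ + s₄ - 7/4) 0))) :=
            mul_le_mul_of_nonneg_left hker_le hα0
        _ = g₁ * g₂ * ((C₃^b₃ * C₄^b₄ * K₂) * l ^ (-(s₃ + s₄)) *
              ‖x₃ - x₁‖ ^ (-(max (s₃ + s₄ - 7/4) 0))) := by
            rw [hα]; ring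
    -- Layer 3
    have L3 : ∀ x₁ x₂ : EuclideanSpace ℝ (Fin 2), x₁ ∈ D → x₂ ∈ D →
        ‖∫ x₃ in D, ∫ x₄ in D,
            |besselJ a₁ (l * ‖x₁ - x₂‖)| ^ b₁ * |besselJ a₂ (l * ‖x₂ - x₃‖)| ^ b₂ *
            |besselJ a₃ (l * ‖x₃ - x₄‖)| ^ b₃ * |besselJ a₄ (l * ‖x₄ - x₁‖)| ^ b₄‖
          ≤ |besselJ a₁ (l * ‖x₁ - x₂‖)| ^ b₁ *
            ((C₂^b₂ * (C₃^b₃ * C₄^b₄ * K₂) * K₃) * l ^ (-(s₂ + (s₃ + s₄)))) := by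
      intro x₁ x₂ hx₁ hx₂
      obtain ⟨hker_int, hker_le⟩ := hK₃ x₂ x₁ D hDm (hDball x₂ hx₂) (hDball x₁ hx₁)
        (Or.inr harith1)
      rw [harith2, neg_zero, Real.rpow_zero, mul_one] at hker_le
      set g₁ := |besselJ a₁ (l * ‖x₁ - x₂‖)| ^ b₁ with hg₁def
      have hg₁ : 0 ≤ g₁ := by rw [hg₁def]; positivity
      set β : ℝ := g₁ * (C₂^b₂ * (C₃^b₃ * C₄^b₄ * K₂) * l ^ (-(s₂ + (s₃ + s₄)))) with hβ
      have hβ0 : 0 ≤ β := by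
        rw [hβ]
        exact mul_nonneg hg₁ (mul_nonneg (mul_nonneg hC₂b
          (mul_nonneg (mul_nonneg hC₃b hC₄b) hK₂0)) (hlr _))
      have hbound : ∀ᵐ x₃ ∂(volume.restrict D),
          ‖∫ x₄ in D,
            g₁ * |besselJ a₂ (l * ‖x₂ - x₃‖)| ^ b₂ *
            |besselJ a₃ (l * ‖x₃ - x₄‖)| ^ b₃ * |besselJ a₄ (l * ‖x₄ - x₁‖)| ^ b₄‖
            ≤ β * (‖x₃ - x₂‖ ^ (-s₂) * ‖x₃ - x₁‖ ^ (-(max (s₃ + s₄ - 7/4) 0))) := by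
        filter_upwards [ae_restrict_mem hDm, hae_ne x₁, hae_ne x₂] with x₃ hx₃D h₃₁ h₃₂
        have hb₂ := key a₂ b₂ C₂ hC₂0.le hC₂ x₂ x₃ (Ne.symm h₃₂)
        rw [← hs₂def] at hb₂
        have hZnn : (0:ℝ) ≤ (C₃^b₃ * C₄^b₄ * K₂) * l ^ (-(s₃ + s₄)) *
            ‖x₃ - x₁‖ ^ (-(max (s₃ + s₄ - 7/4) 0)) :=
          mul_nonneg (mul_nonneg (mul_nonneg (mul_nonneg hC₃b hC₄b) hK₂0) (hlr _))
            (Real.rpow_nonneg (norm_nonneg _) _)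
        calc ‖∫ x₄ in D,
              g₁ * |besselJ a₂ (l * ‖x₂ - x₃‖)| ^ b₂ *
              |besselJ a₃ (l * ‖x₃ - x₄‖)| ^ b₃ * |besselJ a₄ (l * ‖x₄ - x₁‖)| ^ b₄‖
            ≤ g₁ * |besselJ a₂ (l * ‖x₂ - x₃‖)| ^ b₂ *
              ((C₃^b₃ * C₄^b₄ * K₂) * l ^ (-(s₃ + s₄)) *
                ‖x₃ - x₁‖ ^ (-(max (s₃ + s₄ - 7/4) 0))) := L4 x₁ x₂ x₃ hx₁ hx₃D h₃₁
          _ ≤ g₁ * (C₂^b₂ * (l ^ (-s₂) * ‖x₂ - x₃‖ ^ (-s₂))) *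
              ((C₃^b₃ * C₄^b₄ * K₂) * l ^ (-(s₃ + s₄)) *
                ‖x₃ - x₁‖ ^ (-(max (s₃ + s₄ - 7/4) 0))) :=
              mul_le_mul_of_nonneg_right (mul_le_mul_of_nonneg_left hb₂ hg₁) hZnn
          _ = β * (‖x₃ - x₂‖ ^ (-s₂) * ‖x₃ - x₁‖ ^ (-(max (s₃ + s₄ - 7/4) 0))) := by
              rw [hβ, norm_sub_rev x₃ x₂,
                show l ^ (-(s₂ + (s₃ + s₄))) = l ^ (-s₂) * l ^ (-(s₃ + s₄)) from
                  (RieszAux.rpow_neg_add hl0.le (by linarith) (by linarith)).symm]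
              ring
      calc ‖∫ x₃ in D, ∫ x₄ in D,
            g₁ * |besselJ a₂ (l * ‖x₂ - x₃‖)| ^ b₂ *
            |besselJ a₃ (l * ‖x₃ - x₄‖)| ^ b₃ * |besselJ a₄ (l * ‖x₄ - x₁‖)| ^ b₄‖
          ≤ ∫ x₃ in D, β * (‖x₃ - x₂‖ ^ (-s₂) * ‖x₃ - x₁‖ ^ (-(max (s₃ + s₄ - 7/4) 0))) :=
            norm_integral_le_of_norm_le (hker_int.const_mul β) hbound
        _ = β * ∫ x₃ in D, ‖x₃ - x₂‖ ^ (-s₂) * ‖x₃ - x₁‖ ^ (-(max (s₃ + s₄ - 7/4) 0)) :=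
            integral_const_mul _ _
        _ ≤ β * K₃ := mul_le_mul_of_nonneg_left hker_le hβ0
        _ = g₁ * ((C₂^b₂ * (C₃^b₃ * C₄^b₄ * K₂) * K₃) * l ^ (-(s₂ + (s₃ + s₄)))) := by
            rw [hβ]; ring
    -- Layer 2
    have L2 : ∀ x₁ : EuclideanSpace ℝ (Fin 2), x₁ ∈ D →
        ‖∫ x₂ in D, ∫ x₃ in D, ∫ x₄ in D,
            |besselJ a₁ (l * ‖x₁ - x₂‖)| ^ b₁ * |besselJ a₂ (l * ‖x₂ - x₃‖)| ^ b₂ *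
            |besselJ a₃ (l * ‖x₃ - x₄‖)| ^ b₃ * |besselJ a₄ (l * ‖x₄ - x₁‖)| ^ b₄‖
          ≤ ((C₁^b₁ * (C₂^b₂ * (C₃^b₃ * C₄^b₄ * K₂) * K₃)) * K₄) *
            l ^ (-(s₁ + (s₂ + (s₃ + s₄)))) := by
      intro x₁ hx₁
      obtain ⟨hker_int, hker_le⟩ := hK₄ x₁ D hDm (hDball x₁ hx₁)
      set γ : ℝ := (C₁^b₁ * (C₂^b₂ * (C₃^b₃ * C₄^b₄ * K₂) * K₃)) *
        l ^ (-(s₁ + (s₂ + (s₃ + s₄)))) with hγ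
      have hrest0 : (0:ℝ) ≤ C₂^b₂ * (C₃^b₃ * C₄^b₄ * K₂) * K₃ :=
        mul_nonneg (mul_nonneg hC₂b (mul_nonneg (mul_nonneg hC₃b hC₄b) hK₂0)) hK₃0
      have hγ0 : 0 ≤ γ := by
        rw [hγ]
        exact mul_nonneg (mul_nonneg hC₁b hrest0) (hlr _)
      have hbound : ∀ᵐ x₂ ∂(volume.restrict D),
          ‖∫ x₃ in D, ∫ x₄ in D,
            |besselJ a₁ (l * ‖x₁ - x₂‖)| ^ b₁ * |besselJ a₂ (l * ‖x₂ - x₃‖)| ^ b₂ *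
            |besselJ a₃ (l * ‖x₃ - x₄‖)| ^ b₃ * |besselJ a₄ (l * ‖x₄ - x₁‖)| ^ b₄‖
            ≤ γ * ‖x₂ - x₁‖ ^ (-s₁) := by
        filter_upwards [ae_restrict_mem hDm, hae_ne x₁] with x₂ hx₂D h₂₁
        have hb₁ := key a₁ b₁ C₁ hC₁0.le hC₁ x₁ x₂ (Ne.symm h₂₁)
        rw [← hs₁def] at hb₁
        calc ‖∫ x₃ in D, ∫ x₄ in D,
              |besselJ a₁ (l * ‖x₁ - x₂‖)| ^ b₁ * |besselJ a₂ (l * ‖x₂ - x₃‖)| ^ b₂ *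
              |besselJ a₃ (l * ‖x₃ - x₄‖)| ^ b₃ * |besselJ a₄ (l * ‖x₄ - x₁‖)| ^ b₄‖
            ≤ |besselJ a₁ (l * ‖x₁ - x₂‖)| ^ b₁ *
              ((C₂^b₂ * (C₃^b₃ * C₄^b₄ * K₂) * K₃) * l ^ (-(s₂ + (s₃ + s₄)))) :=
              L3 x₁ x₂ hx₁ hx₂D
          _ ≤ (C₁^b₁ * (l ^ (-s₁) * ‖x₁ - x₂‖ ^ (-s₁))) *
              ((C₂^b₂ * (C₃^b₃ * C₄^b₄ * K₂) * K₃) * l ^ (-(s₂ + (s₃ + s₄)))) :=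
              mul_le_mul_of_nonneg_right hb₁ (mul_nonneg hrest0 (hlr _))
          _ = γ * ‖x₂ - x₁‖ ^ (-s₁) := by
              rw [hγ, norm_sub_rev x₂ x₁,
                show l ^ (-(s₁ + (s₂ + (s₃ + s₄)))) = l ^ (-s₁) * l ^ (-(s₂ + (s₃ + s₄))) from
                  (RieszAux.rpow_neg_add hl0.le (by linarith) (by linarith)).symm]
              ring
      calc ‖∫ x₂ in D, ∫ x₃ in D, ∫ x₄ in D,
            |besselJ a₁ (l * ‖x₁ - x₂‖)| ^ b₁ * |besselJ a₂ (l * ‖x₂ - x₃‖)| ^ b₂ *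
            |besselJ a₃ (l * ‖x₃ - x₄‖)| ^ b₃ * |besselJ a₄ (l * ‖x₄ - x₁‖)| ^ b₄‖
          ≤ ∫ x₂ in D, γ * ‖x₂ - x₁‖ ^ (-s₁) :=
            norm_integral_le_of_norm_le (hker_int.const_mul γ) hbound
        _ = γ * ∫ x₂ in D, ‖x₂ - x₁‖ ^ (-s₁) := integral_const_mul _ _
        _ ≤ γ * K₄ := mul_le_mul_of_nonneg_left hker_le hγ0
        _ = ((C₁^b₁ * (C₂^b₂ * (C₃^b₃ * C₄^b₄ * K₂) * K₃)) * K₄) *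
            l ^ (-(s₁ + (s₂ + (s₃ + s₄)))) := by rw [hγ]; ring
    -- Layer 1
    have L1 : ‖∫ x₁ in D, ∫ x₂ in D, ∫ x₃ in D, ∫ x₄ in D,
            |besselJ a₁ (l * ‖x₁ - x₂‖)| ^ b₁ * |besselJ a₂ (l * ‖x₂ - x₃‖)| ^ b₂ *
            |besselJ a₃ (l * ‖x₃ - x₄‖)| ^ b₃ * |besselJ a₄ (l * ‖x₄ - x₁‖)| ^ b₄‖
          ≤ (((C₁^b₁ * (C₂^b₂ * (C₃^b₃ * C₄^b₄ * K₂) * K₃)) * K₄) *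
            l ^ (-(s₁ + (s₂ + (s₃ + s₄))))) * (volume D).toReal := by
      apply norm_setIntegral_le_of_norm_le_const hDcomp.measure_lt_top
      intro x₁ hx₁
      exact L2 x₁ hx₁
    -- conclude
    have hl4 : l ^ (-(s₁ + (s₂ + (s₃ + s₄)))) = (16 * π^4 * E^2)⁻¹ := by
      rw [show (s₁ + (s₂ + (s₃ + s₄))) = (4:ℝ) by linarith [hsums],
        show (-(4:ℝ)) = -((4:ℕ):ℝ) by norm_num, Real.rpow_neg hl0.le, Real.rpow_natCast]
      congr 1
      rw [hl, mul_pow, mul_pow, show Real.sqrt E ^ 4 = E^2 by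
        rw [show 4 = 2*2 from rfl, pow_mul, Real.sq_sqrt hE0.le]]
      norm_num
    have hIb : (∫ x₁ in D, ∫ x₂ in D, ∫ x₃ in D, ∫ x₄ in D,
            |besselJ a₁ (l * ‖x₁ - x₂‖)| ^ b₁ * |besselJ a₂ (l * ‖x₂ - x₃‖)| ^ b₂ *
            |besselJ a₃ (l * ‖x₃ - x₄‖)| ^ b₃ * |besselJ a₄ (l * ‖x₄ - x₁‖)| ^ b₄)
          ≤ Ctot * (16 * π^4 * E^2)⁻¹ := by
      refine (le_abs_self _).trans ?_
      rw [← Real.norm_eq_abs]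
      refine L1.trans ?_
      rw [hl4, hCtotdef]
      ring_nf
      exact le_refl _
    have hlog0 : 0 < Real.log E := Real.log_pos hE1
    calc E ^ 2 / Real.log E ^ 2 *
          (∫ x₁ in D, ∫ x₂ in D, ∫ x₃ in D, ∫ x₄ in D,
            |besselJ a₁ (l * ‖x₁ - x₂‖)| ^ b₁ * |besselJ a₂ (l * ‖x₂ - x₃‖)| ^ b₂ *
            |besselJ a₃ (l * ‖x₃ - x₄‖)| ^ b₃ * |besselJ a₄ (l * ‖x₄ - x₁‖)| ^ b₄)
        ≤ E ^ 2 / Real.log E ^ 2 * (Ctot * (16 * π^4 * E^2)⁻¹) :=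
          mul_le_mul_of_nonneg_left hIb (by positivity)
      _ = Mtot / Real.log E ^ 2 := by
          rw [hMtotdef]
          have hπ := Real.pi_ne_zero
          field_simp
end
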